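/- arXiv:0707.0994 — 5 statements merged into one kernel-verified Lean document; each statement's English description precedes it below -/
import Mathlib

section
/- Let f be an internal map from A ⊆ R̃^d to R̃^{d'}. If A and f(A) are sharply bounded, then both A and f(A) are internal subsets of R̃^d and R̃^{d'} respectively. -/
open Filter Topology Asymptotics

noncomputable section

namespace ColombeauPaper

variable {ι κ : Type*} {E : Type*} [AddCommGroup E] [Module ℝ E]
  {F : Type*} [AddCommGroup F] [Module ℝ F]

/-- A net `(u_ε)` in `E` is moderate for the family of seminorms `p` if for every `i`
there is `M ∈ ℕ` with `p i (u_ε) ≤ ε ^ (-M)` for all sufficiently small `ε > 0`. -/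
def IsModerate (p : ι → Seminorm ℝ E) (u : ℝ → E) : Prop :=
  ∀ i, ∃ M : ℕ, ∀ᶠ ε in 𝓝[>] (0 : ℝ), p i (u ε) ≤ ε ^ (-(M : ℤ))

/-- A net `(u_ε)` in `E` is negligible if for every `i` and every `m ∈ ℕ` one has
`p i (u_ε) ≤ ε ^ m` for all sufficiently small `ε > 0`. -/
def IsNegligible (p : ι → Seminorm ℝ E) (u : ℝ → E) : Prop :=
  ∀ i, ∀ m : ℕ, ∀ᶠ ε in 𝓝[>] (0 : ℝ), p i (u ε) ≤ ε ^ m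

/-- A negligible net of real numbers. -/
def IsNegligibleR (n : ℝ → ℝ) : Prop :=
  ∀ m : ℕ, ∀ᶠ ε in 𝓝[>] (0 : ℝ), |n ε| ≤ ε ^ m

lemma small_mem : {ε : ℝ | 0 < ε ∧ ε ≤ 1 / 2} ∈ 𝓝[>] (0 : ℝ) := by
  have h : Set.Ioo (0 : ℝ) (1 / 2) ∈ 𝓝[>] (0 : ℝ) :=
    Ioo_mem_nhdsGT_of_mem ⟨le_refl 0, by norm_num⟩
  filter_upwards [h] with ε hε
  exact ⟨hε.1, hε.2.le⟩

lemma zpow_neg_natCast_eq {ε : ℝ} (k : ℕ) : ε ^ (-(k : ℤ)) = ε⁻¹ ^ (k : ℤ) := by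
  rw [zpow_neg, inv_zpow]

/-- The moderate nets form an additive subgroup of `(0,1) → E` (here modelled on `ℝ → E`,
with all conditions holding for sufficiently small `ε > 0`). -/
def moderateGroup (p : ι → Seminorm ℝ E) : AddSubgroup (ℝ → E) where
  carrier := {u | IsModerate p u}
  zero_mem' := by
    intro i
    refine ⟨0, ?_⟩
    filter_upwards [self_mem_nhdsWithin] with ε hε
    have hε' : (0 : ℝ) < ε := hε
    simp only [Pi.zero_apply, map_zero]
    positivity
  add_mem' := by
    intro u v hu hv i
    obtain ⟨M, hM⟩ := hu i
    obtain ⟨N, hN⟩ := hv i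
    refine ⟨max M N + 1, ?_⟩
    filter_upwards [hM, hN, small_mem] with ε h1 h2 h3
    obtain ⟨hε, hε2⟩ := h3
    have hinv : (1 : ℝ) ≤ ε⁻¹ := (one_le_inv₀ hε).2 (by linarith)
    have h2inv : (2 : ℝ) ≤ ε⁻¹ := by
      nlinarith [mul_inv_cancel₀ (ne_of_gt hε)]
    have key : ∀ k l : ℕ, k ≤ l → ε ^ (-(k : ℤ)) ≤ ε ^ (-(l : ℤ)) := by
      intro k l hkl
      rw [zpow_neg_natCast_eq, zpow_neg_natCast_eq]
      exact zpow_le_zpow_right₀ hinv (by exact_mod_cast hkl)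
    set K : ℕ := max M N with hK
    have h1' : p i (u ε) ≤ ε ^ (-(K : ℤ)) := h1.trans (key M K (le_max_left _ _))
    have h2' : p i (v ε) ≤ ε ^ (-(K : ℤ)) := h2.trans (key N K (le_max_right _ _))
    have tri : p i ((u + v) ε) ≤ p i (u ε) + p i (v ε) := by
      simpa using map_add_le_add (p i) (u ε) (v ε)
    have efin : ε ^ (-(K : ℤ)) * 2 ≤ ε ^ (-((K + 1 : ℕ) : ℤ)) := by
      rw [zpow_neg_natCast_eq, zpow_neg_natCast_eq]
      push_cast
      have hnn : (0:ℝ) ≤ ε⁻¹ ^ (K : ℤ) := by positivity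
      calc ε⁻¹ ^ (K : ℤ) * 2 ≤ ε⁻¹ ^ (K : ℤ) * ε⁻¹ :=
            mul_le_mul_of_nonneg_left h2inv hnn
        _ = ε⁻¹ ^ ((K : ℤ) + 1) := by rw [zpow_add₀ (by positivity : (ε⁻¹ : ℝ) ≠ 0), zpow_one]
    push_cast at efin ⊢
    linarith
  neg_mem' := by
    intro u hu i
    obtain ⟨M, hM⟩ := hu i
    refine ⟨M, ?_⟩
    filter_upwards [hM] with ε h
    simpa [map_neg_eq_map] using h

/-- The negligible nets form an additive subgroup of the moderate ones. -/
def negligibleGroup (p : ι → Seminorm ℝ E) : AddSubgroup (moderateGroup p) where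
  carrier := {u | IsNegligible p (u : ℝ → E)}
  zero_mem' := by
    intro i m
    filter_upwards [self_mem_nhdsWithin] with ε hε
    have hε' : (0 : ℝ) < ε := hε
    simp only [AddSubgroup.coe_zero, Pi.zero_apply, map_zero]
    positivity
  add_mem' := by
    intro u v hu hv i m
    filter_upwards [hu i (m + 1), hv i (m + 1), small_mem] with ε h1 h2 h3
    obtain ⟨hε, hε2⟩ := h3
    have tri : p i (((u + v : moderateGroup p) : ℝ → E) ε)
        ≤ p i ((u : ℝ → E) ε) + p i ((v : ℝ → E) ε) := by
      simpa using map_add_le_add (p i) ((u : ℝ → E) ε) ((v : ℝ → E) ε)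
    have hpow : ε ^ (m + 1) = ε ^ m * ε := pow_succ ε m
    nlinarith [pow_nonneg hε.le m]
  neg_mem' := by
    intro u hu i m
    filter_upwards [hu i m] with ε h
    have : ((-u : moderateGroup p) : ℝ → E) ε = -((u : ℝ → E) ε) := rfl
    rw [this, map_neg_eq_map]
    exact h

/-- The Colombeau space based on `E` (with the family of seminorms `p`):
the quotient of the moderate nets by the negligible ones. -/
abbrev Colombeau (p : ι → Seminorm ℝ E) : Type _ :=
  moderateGroup p ⧸ negligibleGroup p

/-- The internal subset of `𝒢_E` generated by a net `(A_ε)` of subsets of `E`: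
all `u` having a representative `(u_ε)` with `u_ε ∈ A_ε` for sufficiently small `ε`. -/
def internalSet (p : ι → Seminorm ℝ E) (A : ℝ → Set E) : Set (Colombeau p) :=
  {u | ∃ w : moderateGroup p, (QuotientAddGroup.mk w : Colombeau p) = u ∧
        ∀ᶠ ε in 𝓝[>] (0 : ℝ), (w : ℝ → E) ε ∈ A ε}

/-- A subset of `𝒢_E` is internal if it is generated by some net of subsets of `E`. -/
def IsInternal (p : ι → Seminorm ℝ E) (A : Set (Colombeau p)) : Prop :=
  ∃ Anet : ℝ → Set E, A = internalSet p Anet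

/-- `d_i(u, A) = inf_{v ∈ A} p_i (u - v)`, with value `+∞` for `A = ∅`. -/
def semiDist (p : ι → Seminorm ℝ E) (i : ι) (u : E) (A : Set E) : EReal :=
  ⨅ v ∈ A, ((p i (u - v) : ℝ) : EReal)

/-- A sharply bounded net of subsets of `E`. -/
def SharplyBoundedNet (p : ι → Seminorm ℝ E) (A : ℝ → Set E) : Prop :=
  ∀ i, ∃ M : ℕ, ∀ᶠ ε in 𝓝[>] (0 : ℝ), ∀ w ∈ A ε, p i w ≤ ε ^ (-(M : ℤ))

/-- `p_i(u) ≤ α ^ t` in `ℝ̃` (where `α` is the class of `(ε)_ε`): some representative of the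
net of seminorms is bounded by `ε ^ t` up to a negligible net for small `ε`. -/
def seminormLeAlpha (p : ι → Seminorm ℝ E) (i : ι) (u : Colombeau p) (t : ℝ) : Prop :=
  ∃ (w : moderateGroup p) (n : ℝ → ℝ), (QuotientAddGroup.mk w : Colombeau p) = u ∧
    IsNegligibleR n ∧ ∀ᶠ ε in 𝓝[>] (0 : ℝ), p i ((w : ℝ → E) ε) ≤ ε ^ t + n ε

/-- The ultra-pseudo-seminorm `u ↦ |p_i(u)|_s = e^{-ν(p_i(u))}` on `𝒢_E`, where
`ν(x) = sup {b : |x_ε| = O(ε^b)}` is the valuation. -/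
def sharpSemi (p : ι → Seminorm ℝ E) (i : ι) (u : Colombeau p) : ℝ :=
  sInf {r : ℝ | ∃ (b : ℝ) (w : moderateGroup p), (QuotientAddGroup.mk w : Colombeau p) = u ∧
    r = Real.exp (-b) ∧ (fun ε => (p i ((w : ℝ → E) ε) : ℝ)) =O[𝓝[>] (0 : ℝ)] fun ε => ε ^ b}

/-- The sharp topology on `𝒢_E`: the topology generated by the ultra-pseudo-seminorms
`u ↦ |p_i(u)|_s`, i.e. generated by all the corresponding balls. -/
def sharpTopology (p : ι → Seminorm ℝ E) : TopologicalSpace (Colombeau p) :=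
  TopologicalSpace.generateFrom
    {B | ∃ (u : Colombeau p) (i : ι) (r : ℝ), 0 < r ∧
          B = {v | sharpSemi p i (v - u) < r}}

lemma indicator_norm_le_one (S : Set ℝ) (ε : ℝ) :
    ‖S.indicator (fun _ => (1 : ℝ)) ε‖ ≤ 1 := by
  by_cases h : ε ∈ S <;>
    simp [Set.indicator_of_mem, Set.indicator_of_notMem, h]

lemma eAux_le (p : ι → Seminorm ℝ E) (S : Set ℝ) (i : ι) (ε : ℝ) (x : E) :
    p i (S.indicator (fun _ => (1 : ℝ)) ε • x) ≤ p i x := by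
  rw [map_smul_eq_mul]
  calc ‖S.indicator (fun _ => (1 : ℝ)) ε‖ * p i x ≤ 1 * p i x :=
        mul_le_mul_of_nonneg_right (indicator_norm_le_one S ε) (apply_nonneg _ _)
    _ = p i x := one_mul _

/-- Multiplication by the characteristic function `χ_S`, on representatives. -/
def eAux (p : ι → Seminorm ℝ E) (S : Set ℝ) : moderateGroup p →+ moderateGroup p where
  toFun u := ⟨fun ε => S.indicator (fun _ => (1 : ℝ)) ε • (u : ℝ → E) ε, by
    have hu : IsModerate p (u : ℝ → E) := u.2
    intro i
    obtain ⟨M, hM⟩ := hu i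
    refine ⟨M, ?_⟩
    filter_upwards [hM] with ε hε
    exact (eAux_le p S i ε _).trans hε⟩
  map_zero' := by
    apply Subtype.ext
    funext ε
    simp
  map_add' u v := by
    apply Subtype.ext
    funext ε
    simp [smul_add]

/-- Multiplication by `e_S`, the class of the characteristic function of `S ⊆ (0,1)`,
as a map `𝒢_E → 𝒢_E`. -/
def eMul (p : ι → Seminorm ℝ E) (S : Set ℝ) : Colombeau p →+ Colombeau p :=
  QuotientAddGroup.map _ _ (eAux p S) (by
    intro u hu
    rw [AddSubgroup.mem_comap]
    have hu' : IsNegligible p (u : ℝ → E) := hu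
    show IsNegligible p _
    intro i m
    filter_upwards [hu' i m] with ε hε
    exact (eAux_le p S i ε _).trans hε)

/-- The set of finite interleavings `∑_{j=1}^m e_{S_j} a_j` of elements of `A`,
over partitions `{S_1, …, S_m}` of `(0,1)`. -/
def interleaving (p : ι → Seminorm ℝ E) (A : Set (Colombeau p)) : Set (Colombeau p) :=
  {u | ∃ (m : ℕ) (S : Fin m → Set ℝ) (a : Fin m → Colombeau p),
        (∀ j, a j ∈ A) ∧ (∀ j, S j ⊆ Set.Ioo 0 1) ∧
        (Pairwise fun j k => Disjoint (S j) (S k)) ∧ (⋃ j, S j) = Set.Ioo 0 1 ∧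
        u = ∑ j, eMul p (S j) (a j)}

/-- The family of seminorms `max (p_i, q_j)` generating the product topology on `E × F`. -/
def prodSeminorm (p : ι → Seminorm ℝ E) (q : κ → Seminorm ℝ F) :
    ι × κ → Seminorm ℝ (E × F) :=
  fun ij => (p ij.1).comp (LinearMap.fst ℝ E F) ⊔ (q ij.2).comp (LinearMap.snd ℝ E F)

lemma prodSeminorm_apply (p : ι → Seminorm ℝ E) (q : κ → Seminorm ℝ F) (i : ι) (j : κ)
    (x : E × F) : prodSeminorm p q (i, j) x = max (p i x.1) (q j x.2) := by
  simp [prodSeminorm, Seminorm.sup_apply, Seminorm.comp_apply]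

/-- First component of a moderate net in `E × F`, as a moderate net in `E`. -/
def prodFstAux [Nonempty κ] (p : ι → Seminorm ℝ E) (q : κ → Seminorm ℝ F) :
    moderateGroup (prodSeminorm p q) →+ moderateGroup p where
  toFun w := ⟨fun ε => ((w : ℝ → E × F) ε).1, by
    have hw : IsModerate (prodSeminorm p q) (w : ℝ → E × F) := w.2
    intro i
    obtain ⟨j⟩ := ‹Nonempty κ›
    obtain ⟨M, hM⟩ := hw (i, j)
    refine ⟨M, ?_⟩
    filter_upwards [hM] with ε hε
    calc p i (((w : ℝ → E × F) ε).1) ≤ prodSeminorm p q (i, j) ((w : ℝ → E × F) ε) := by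
          rw [prodSeminorm_apply]; exact le_max_left _ _
      _ ≤ ε ^ (-(M : ℤ)) := hε⟩
  map_zero' := by apply Subtype.ext; funext ε; simp
  map_add' u v := by apply Subtype.ext; funext ε; simp

/-- Second component of a moderate net in `E × F`, as a moderate net in `F`. -/
def prodSndAux [Nonempty ι] (p : ι → Seminorm ℝ E) (q : κ → Seminorm ℝ F) :
    moderateGroup (prodSeminorm p q) →+ moderateGroup q where
  toFun w := ⟨fun ε => ((w : ℝ → E × F) ε).2, by
    have hw : IsModerate (prodSeminorm p q) (w : ℝ → E × F) := w.2
    intro j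
    obtain ⟨i⟩ := ‹Nonempty ι›
    obtain ⟨M, hM⟩ := hw (i, j)
    refine ⟨M, ?_⟩
    filter_upwards [hM] with ε hε
    calc q j (((w : ℝ → E × F) ε).2) ≤ prodSeminorm p q (i, j) ((w : ℝ → E × F) ε) := by
          rw [prodSeminorm_apply]; exact le_max_right _ _
      _ ≤ ε ^ (-(M : ℤ)) := hε⟩
  map_zero' := by apply Subtype.ext; funext ε; simp
  map_add' u v := by apply Subtype.ext; funext ε; simp

/-- The canonical identification `𝒢_{E × F} ≅ 𝒢_E × 𝒢_F` (given on representatives by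
`[(u_ε, v_ε)] ↦ ([(u_ε)], [(v_ε)])`). -/
def prodIdent [Nonempty ι] [Nonempty κ] (p : ι → Seminorm ℝ E) (q : κ → Seminorm ℝ F) :
    Colombeau (prodSeminorm p q) →+ Colombeau p × Colombeau q :=
  QuotientAddGroup.lift (negligibleGroup (prodSeminorm p q))
    (((QuotientAddGroup.mk' (negligibleGroup p)).comp (prodFstAux p q)).prod
      ((QuotientAddGroup.mk' (negligibleGroup q)).comp (prodSndAux p q)))
    (by
      intro w hw
      have hw' : IsNegligible (prodSeminorm p q) (w : ℝ → E × F) := hw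
      rw [AddMonoidHom.mem_ker]
      refine Prod.ext ?_ ?_
      · show (QuotientAddGroup.mk' (negligibleGroup p)) (prodFstAux p q w) = 0
        rw [QuotientAddGroup.mk'_apply, QuotientAddGroup.eq_zero_iff]
        show IsNegligible p _
        intro i m
        obtain ⟨j⟩ := ‹Nonempty κ›
        filter_upwards [hw' (i, j) m] with ε hε
        calc p i (((w : ℝ → E × F) ε).1)
            ≤ prodSeminorm p q (i, j) ((w : ℝ → E × F) ε) := by
              rw [prodSeminorm_apply]; exact le_max_left _ _
          _ ≤ ε ^ m := hε
      · show (QuotientAddGroup.mk' (negligibleGroup q)) (prodSndAux p q w) = 0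
        rw [QuotientAddGroup.mk'_apply, QuotientAddGroup.eq_zero_iff]
        show IsNegligible q _
        intro j m
        obtain ⟨i⟩ := ‹Nonempty ι›
        filter_upwards [hw' (i, j) m] with ε hε
        calc q j (((w : ℝ → E × F) ε).2)
            ≤ prodSeminorm p q (i, j) ((w : ℝ → E × F) ε) := by
              rw [prodSeminorm_apply]; exact le_max_right _ _
          _ ≤ ε ^ m := hε)

/-- A subset of `𝒢_E × 𝒢_F` is internal if, under the canonical identification
`𝒢_{E×F} ≅ 𝒢_E × 𝒢_F`, it corresponds to an internal subset of `𝒢_{E×F}`. -/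
def IsInternalProd [Nonempty ι] [Nonempty κ] (p : ι → Seminorm ℝ E) (q : κ → Seminorm ℝ F)
    (C : Set (Colombeau p × Colombeau q)) : Prop :=
  ∃ Cnet : ℝ → Set (E × F),
    C = prodIdent p q '' internalSet (prodSeminorm p q) Cnet

section Normed

variable (V : Type*) [NormedAddCommGroup V] [NormedSpace ℝ V]

/-- The norm of a normed space, as a one-element family of seminorms. -/
abbrev normFamily : Unit → Seminorm ℝ V := fun _ => normSeminorm ℝ V

/-- The Colombeau space based on a normed space `V`. -/
abbrev GN := Colombeau (normFamily V)

variable {V}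

/-- `‖u‖ ≤ α ^ t` in `ℝ̃`, where `α` is the class of `(ε)_ε`. -/
def normLeAlpha (u : GN V) (t : ℝ) : Prop :=
  ∃ (w : moderateGroup (normFamily V)) (n : ℝ → ℝ),
    (QuotientAddGroup.mk w : GN V) = u ∧ IsNegligibleR n ∧
    ∀ᶠ ε in 𝓝[>] (0 : ℝ), ‖(w : ℝ → V) ε‖ ≤ ε ^ t + n ε

/-- `‖u‖ ≤ ‖v‖` in `ℝ̃`. -/
def normLeNorm (u v : GN V) : Prop :=
  ∃ (a b : moderateGroup (normFamily V)) (n : ℝ → ℝ),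
    (QuotientAddGroup.mk a : GN V) = u ∧ (QuotientAddGroup.mk b : GN V) = v ∧
    IsNegligibleR n ∧
    ∀ᶠ ε in 𝓝[>] (0 : ℝ), ‖(a : ℝ → V) ε‖ ≤ ‖(b : ℝ → V) ε‖ + n ε

/-- A subset `A ⊆ 𝒢_V` is sharply bounded if `‖u‖ ≤ α^{-M}` for some `M ∈ ℕ` and all `u ∈ A`. -/
def SharplyBounded (A : Set (GN V)) : Prop :=
  ∃ M : ℕ, ∀ u ∈ A, normLeAlpha u (-(M : ℝ))

/-- A sharply bounded net of subsets of the normed space `V`. -/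
def SharplyBoundedNetN (A : ℝ → Set V) : Prop :=
  ∃ M : ℕ, ∀ᶠ ε in 𝓝[>] (0 : ℝ), ∀ w ∈ A ε, ‖w‖ ≤ ε ^ (-(M : ℤ))

end Normed


/-! ### Auxiliary lemmas for Statement 13 -/

lemma zpow_neg_mono_aux {ε : ℝ} (hε : 0 < ε) (hε1 : ε ≤ 1) {k l : ℕ} (hkl : k ≤ l) :
    ε ^ (-(k : ℤ)) ≤ ε ^ (-(l : ℤ)) := by
  rw [zpow_neg_natCast_eq, zpow_neg_natCast_eq]
  exact zpow_le_zpow_right₀ ((one_le_inv₀ hε).2 hε1) (by exact_mod_cast hkl)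

lemma one_le_zpow_neg_aux {ε : ℝ} (hε : 0 < ε) (hε1 : ε ≤ 1) (M : ℕ) :
    (1 : ℝ) ≤ ε ^ (-(M : ℤ)) := by
  simpa using zpow_neg_mono_aux hε hε1 (Nat.zero_le M)

lemma pow_step_aux {ε : ℝ} (hε : 0 < ε) (hε2 : ε ≤ 1 / 2) (M : ℕ) :
    ε ^ (-(M : ℤ)) + 2 * ε ≤ ε ^ (-((M + 1 : ℕ) : ℤ)) := by
  have hinv2 : (2 : ℝ) ≤ ε⁻¹ := by nlinarith [mul_inv_cancel₀ (ne_of_gt hε)]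
  have h1 : (1 : ℝ) ≤ ε ^ (-(M : ℤ)) := one_le_zpow_neg_aux hε (by linarith) M
  have heq : ε ^ (-((M + 1 : ℕ) : ℤ)) = ε ^ (-(M : ℤ)) * ε⁻¹ := by
    push_cast
    rw [neg_add, zpow_add₀ (ne_of_gt hε), zpow_neg_one]
  rw [heq]
  nlinarith

lemma rpow_neg_natCast_aux {ε : ℝ} (hε : 0 < ε) (M : ℕ) :
    ε ^ (-(M : ℝ)) = ε ^ (-(M : ℤ)) := by
  rw [show (-(M : ℝ)) = ((-(M : ℤ) : ℤ) : ℝ) by push_cast; ring, Real.rpow_intCast]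

lemma normFamily_apply {V : Type*} [NormedAddCommGroup V] [NormedSpace ℝ V]
    (i : Unit) (x : V) : normFamily V i x = ‖x‖ := rfl

lemma negligible_diff {p : ι → Seminorm ℝ E} {a b : moderateGroup p}
    (h : (QuotientAddGroup.mk a : Colombeau p) = QuotientAddGroup.mk b) (i : ι) (m : ℕ) :
    ∀ᶠ ε in 𝓝[>] (0 : ℝ), p i ((a : ℝ → E) ε - (b : ℝ → E) ε) ≤ ε ^ m := by
  have h' : -a + b ∈ negligibleGroup p := QuotientAddGroup.eq.mp h
  have h'' : IsNegligible p ((-a + b : moderateGroup p) : ℝ → E) := h'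
  filter_upwards [h'' i m] with ε hε
  have e1 : ((-a + b : moderateGroup p) : ℝ → E) ε = (b : ℝ → E) ε - (a : ℝ → E) ε := by
    simp [sub_eq_neg_add]
  rw [map_sub_rev, ← e1]
  exact hε

/-- The pairing of a moderate net in `E` and a moderate net in `F`. -/
def pairMod (p : ι → Seminorm ℝ E) (q : κ → Seminorm ℝ F) (u : moderateGroup p)
    (v : moderateGroup q) : moderateGroup (prodSeminorm p q) :=
  ⟨fun ε => ((u : ℝ → E) ε, (v : ℝ → F) ε), by
    have hu : IsModerate p (u : ℝ → E) := u.2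
    have hv : IsModerate q (v : ℝ → F) := v.2
    rintro ⟨i, j⟩
    obtain ⟨M, hM⟩ := hu i
    obtain ⟨N, hN⟩ := hv j
    refine ⟨max M N, ?_⟩
    filter_upwards [hM, hN, small_mem] with ε h1 h2 h3
    obtain ⟨hε, hε2⟩ := h3
    rw [prodSeminorm_apply]
    exact max_le (h1.trans (zpow_neg_mono_aux hε (by linarith) (le_max_left _ _)))
      (h2.trans (zpow_neg_mono_aux hε (by linarith) (le_max_right _ _)))⟩

lemma prodIdent_mk [Nonempty ι] [Nonempty κ] (p : ι → Seminorm ℝ E) (q : κ → Seminorm ℝ F)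
    (w : moderateGroup (prodSeminorm p q)) :
    prodIdent p q (QuotientAddGroup.mk w) =
      (QuotientAddGroup.mk (prodFstAux p q w), QuotientAddGroup.mk (prodSndAux p q w)) := rfl

lemma prodFstAux_pairMod [Nonempty κ] (p : ι → Seminorm ℝ E) (q : κ → Seminorm ℝ F)
    (u : moderateGroup p) (v : moderateGroup q) :
    prodFstAux p q (pairMod p q u v) = u := Subtype.ext rfl

lemma prodSndAux_pairMod [Nonempty ι] (p : ι → Seminorm ℝ E) (q : κ → Seminorm ℝ F)
    (u : moderateGroup p) (v : moderateGroup q) :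
    prodSndAux p q (pairMod p q u v) = v := Subtype.ext rfl

lemma prodFstAux_coe [Nonempty κ] (p : ι → Seminorm ℝ E) (q : κ → Seminorm ℝ F)
    (w : moderateGroup (prodSeminorm p q)) (ε : ℝ) :
    ((prodFstAux p q w : moderateGroup p) : ℝ → E) ε = ((w : ℝ → E × F) ε).1 := rfl

lemma prodSndAux_coe [Nonempty ι] (p : ι → Seminorm ℝ E) (q : κ → Seminorm ℝ F)
    (w : moderateGroup (prodSeminorm p q)) (ε : ℝ) :
    ((prodSndAux p q w : moderateGroup q) : ℝ → F) ε = ((w : ℝ → E × F) ε).2 := rfl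

/-- If `f` is an internal map `A ⊆ ℝ̃^d → ℝ̃^{d'}` and `A` and `f(A)` are
sharply bounded, then `A` and `f(A)` are internal. -/
theorem internal_map_domain_and_range_internal (d d' : ℕ)
    (A : Set (GN (EuclideanSpace ℝ (Fin d))))
    (f : GN (EuclideanSpace ℝ (Fin d)) → GN (EuclideanSpace ℝ (Fin d')))
    (hgraph : IsInternalProd (normFamily (EuclideanSpace ℝ (Fin d)))
      (normFamily (EuclideanSpace ℝ (Fin d')))
      {z : GN (EuclideanSpace ℝ (Fin d)) × GN (EuclideanSpace ℝ (Fin d')) |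
        z.1 ∈ A ∧ z.2 = f z.1})
    (hA : SharplyBounded A) (hfA : SharplyBounded (f '' A)) :
    IsInternal (normFamily (EuclideanSpace ℝ (Fin d))) A ∧
    IsInternal (normFamily (EuclideanSpace ℝ (Fin d'))) (f '' A) := by
  classical
  obtain ⟨Cnet, hC⟩ := hgraph
  obtain ⟨M, hM⟩ := hA
  obtain ⟨N, hN⟩ := hfA
  set p := normFamily (EuclideanSpace ℝ (Fin d)) with hp
  set q := normFamily (EuclideanSpace ℝ (Fin d')) with hq
  set D : ℝ → Set (EuclideanSpace ℝ (Fin d) × EuclideanSpace ℝ (Fin d')) :=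
    fun ε => {z | z ∈ Cnet ε ∧ ‖z.1‖ ≤ ε ^ (-((M + 1 : ℕ) : ℤ)) ∧
      ‖z.2‖ ≤ ε ^ (-((N + 1 : ℕ) : ℤ))} with hDdef
  -- Key 1: every point of the graph has a representative eventually in `D`.
  have key1 : ∀ u, u ∈ A → ∃ w : moderateGroup (prodSeminorm p q),
      prodIdent p q (QuotientAddGroup.mk w) = (u, f u) ∧
      ∀ᶠ ε in 𝓝[>] (0 : ℝ),
        ((w : ℝ → EuclideanSpace ℝ (Fin d) × EuclideanSpace ℝ (Fin d')) ε) ∈ D ε := by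
    intro u hu
    have hz : (u, f u) ∈ {z : GN (EuclideanSpace ℝ (Fin d)) × GN (EuclideanSpace ℝ (Fin d')) |
        z.1 ∈ A ∧ z.2 = f z.1} := ⟨hu, rfl⟩
    rw [hC] at hz
    obtain ⟨c, hcmem, hceq⟩ := hz
    obtain ⟨w, hwc, hwmem⟩ := hcmem
    have hw1 : prodIdent p q (QuotientAddGroup.mk w) = (u, f u) := by rw [hwc]; exact hceq
    refine ⟨w, hw1, ?_⟩
    obtain ⟨a, n, ha, hn, hbound⟩ := hM u hu
    obtain ⟨b, n', hb, hn', hbound'⟩ := hN (f u) ⟨u, hu, rfl⟩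
    rw [prodIdent_mk] at hw1
    have hfst : (QuotientAddGroup.mk (prodFstAux p q w) : Colombeau p)
        = QuotientAddGroup.mk a := (congrArg Prod.fst hw1).trans ha.symm
    have hsnd : (QuotientAddGroup.mk (prodSndAux p q w) : Colombeau q)
        = QuotientAddGroup.mk b := (congrArg Prod.snd hw1).trans hb.symm
    filter_upwards [hwmem, hbound, hbound', hn 1, hn' 1, negligible_diff hfst () 1,
      negligible_diff hsnd () 1, small_mem] with ε hmem hb1 hb2 hn1 hn1' hd1 hd2 h3
    obtain ⟨hε, hε2⟩ := h3
    rw [pow_one] at hn1 hn1' hd1 hd2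
    rw [rpow_neg_natCast_aux hε] at hb1 hb2
    rw [normFamily_apply, prodFstAux_coe] at hd1
    rw [normFamily_apply, prodSndAux_coe] at hd2
    set X := ((w : ℝ → EuclideanSpace ℝ (Fin d) × EuclideanSpace ℝ (Fin d')) ε).1 with hX
    set Y := ((w : ℝ → EuclideanSpace ℝ (Fin d) × EuclideanSpace ℝ (Fin d')) ε).2 with hY
    set Xa := (a : ℝ → EuclideanSpace ℝ (Fin d)) ε with hXa
    set Yb := (b : ℝ → EuclideanSpace ℝ (Fin d')) ε with hYb
    refine ⟨hmem, ?_, ?_⟩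
    · have tri : ‖X‖ ≤ ‖X - Xa‖ + ‖Xa‖ := by
        simpa using norm_add_le (X - Xa) Xa
      have hna : n ε ≤ ε := (abs_le.mp hn1).2
      have := pow_step_aux hε hε2 M
      linarith
    · have tri : ‖Y‖ ≤ ‖Y - Yb‖ + ‖Yb‖ := by
        simpa using norm_add_le (Y - Yb) Yb
      have hnb : n' ε ≤ ε := (abs_le.mp hn1').2
      have := pow_step_aux hε hε2 N
      linarith
  -- Key 2: a pair of moderate nets eventually in `D` yields a point of the graph.
  have key2 : ∀ (w : moderateGroup p) (y : moderateGroup q),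
      (∀ᶠ ε in 𝓝[>] (0 : ℝ), ((w : ℝ → _) ε, (y : ℝ → _) ε) ∈ D ε) →
      (QuotientAddGroup.mk w : Colombeau p) ∈ A ∧
        (QuotientAddGroup.mk y : Colombeau q) = f (QuotientAddGroup.mk w) := by
    intro w y hwy
    have hmem : (QuotientAddGroup.mk (pairMod p q w y) : Colombeau (prodSeminorm p q)) ∈
        internalSet (prodSeminorm p q) Cnet := by
      refine ⟨pairMod p q w y, rfl, ?_⟩
      filter_upwards [hwy] with ε hε
      exact hε.1
    have hgr : prodIdent p q (QuotientAddGroup.mk (pairMod p q w y)) ∈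
        {z : GN (EuclideanSpace ℝ (Fin d)) × GN (EuclideanSpace ℝ (Fin d')) |
          z.1 ∈ A ∧ z.2 = f z.1} := by
      rw [hC]; exact ⟨_, hmem, rfl⟩
    rw [prodIdent_mk, prodFstAux_pairMod, prodSndAux_pairMod] at hgr
    exact hgr
  constructor
  · -- A is internal
    refine ⟨fun ε => Prod.fst '' D ε, ?_⟩
    ext u
    constructor
    · intro hu
      obtain ⟨w, hw1, hw2⟩ := key1 u hu
      rw [prodIdent_mk] at hw1
      refine ⟨prodFstAux p q w, congrArg Prod.fst hw1, ?_⟩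
      filter_upwards [hw2] with ε hε
      exact ⟨_, hε, rfl⟩
    · rintro ⟨w, hw1, hw2⟩
      have hch : ∀ ε : ℝ, ∃ z : EuclideanSpace ℝ (Fin d'),
          (w : ℝ → _) ε ∈ Prod.fst '' D ε → ((w : ℝ → _) ε, z) ∈ D ε := by
        intro ε
        by_cases h : (w : ℝ → _) ε ∈ Prod.fst '' D ε
        · obtain ⟨z, hz, hz1⟩ := h
          exact ⟨z.2, fun _ => by rw [← hz1]; simpa using hz⟩
        · exact ⟨0, fun hcon => absurd hcon h⟩
      choose y0 hy0 using hch
      have hy0mem : ∀ᶠ ε in 𝓝[>] (0 : ℝ), ((w : ℝ → _) ε, y0 ε) ∈ D ε := by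
        filter_upwards [hw2] with ε hε
        exact hy0 ε hε
      have hy0mod : IsModerate q y0 := by
        intro i
        refine ⟨N + 1, ?_⟩
        filter_upwards [hy0mem] with ε hε
        rw [normFamily_apply]
        exact hε.2.2
      obtain ⟨h1, _⟩ := key2 w ⟨y0, hy0mod⟩ hy0mem
      exact hw1 ▸ h1
  · -- f '' A is internal
    refine ⟨fun ε => Prod.snd '' D ε, ?_⟩
    ext v
    constructor
    · rintro ⟨u, hu, rfl⟩
      obtain ⟨w, hw1, hw2⟩ := key1 u hu
      rw [prodIdent_mk] at hw1
      refine ⟨prodSndAux p q w, congrArg Prod.snd hw1, ?_⟩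
      filter_upwards [hw2] with ε hε
      exact ⟨_, hε, rfl⟩
    · rintro ⟨y, hy1, hy2⟩
      have hch : ∀ ε : ℝ, ∃ z : EuclideanSpace ℝ (Fin d),
          (y : ℝ → _) ε ∈ Prod.snd '' D ε → ((z, (y : ℝ → _) ε)) ∈ D ε := by
        intro ε
        by_cases h : (y : ℝ → _) ε ∈ Prod.snd '' D ε
        · obtain ⟨z, hz, hz1⟩ := h
          exact ⟨z.1, fun _ => by rw [← hz1]; simpa using hz⟩
        · exact ⟨0, fun hcon => absurd hcon h⟩
      choose x0 hx0 using hch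
      have hx0mem : ∀ᶠ ε in 𝓝[>] (0 : ℝ), ((x0 ε, (y : ℝ → _) ε)) ∈ D ε := by
        filter_upwards [hy2] with ε hε
        exact hx0 ε hε
      have hx0mod : IsModerate p x0 := by
        intro i
        refine ⟨M + 1, ?_⟩
        filter_upwards [hx0mem] with ε hε
        rw [normFamily_apply]
        exact hε.2.1
      obtain ⟨h1, h2⟩ := key2 ⟨x0, hx0mod⟩ y hx0mem
      exact ⟨_, h1, by rw [← hy1]; exact h2.symm⟩

end ColombeauPaper
end
end

section
/- Let Ω ⊆ ℝ^d be open and f ∈ G(Ω). Then for each internal subset A of R̃^d with A ⊆ Ω̃_c, the induced pointwise map f : A → C̃, x ↦ f(x), is internal, i.e., its graph {(x, f(x)) : x ∈ A} is an internal subset of R̃^{d+2} (identifying C̃ with R̃^2). -/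
open Filter Topology Asymptotics

noncomputable section

namespace ColombeauPaper

variable {ι κ : Type*} {E : Type*} [AddCommGroup E] [Module ℝ E]
  {F : Type*} [AddCommGroup F] [Module ℝ F]

/-- `ℝ^d` with the Euclidean norm. -/
abbrev ESp (d : ℕ) := EuclideanSpace ℝ (Fin d)

/-- A net `(f_ε)` of smooth functions on the open set `Ω ⊆ ℝ^d` which is moderate for the
seminorms `p_n(f) = sup_{|β| ≤ n, x ∈ K} |∂^β f(x)|`, `K ⊂ Ω` compact: a representative of
an element of the Colombeau algebra `𝒢(Ω)`. -/
def GOmegaModerate {d : ℕ} (Omega : Set (ESp d)) (f : ℝ → ESp d → ℂ) : Prop :=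
  (∀ ε, ContDiffOn ℝ (⊤ : ℕ∞) (f ε) Omega) ∧
  ∀ K : Set (ESp d), IsCompact K → K ⊆ Omega → ∀ j : ℕ, ∃ M : ℕ,
    ∀ᶠ ε in 𝓝[>] (0 : ℝ), ∀ x ∈ K, ‖iteratedFDerivWithin ℝ j (f ε) Omega x‖ ≤ ε ^ (-(M : ℤ))

/-- `y = f(x)` for the pointwise map induced by `f ∈ 𝒢(Ω)` on compactly supported
generalized points: on representatives, `f(x) = [(f_ε(x_ε))]`. -/
def pointValue {d : ℕ} (f : ℝ → ESp d → ℂ) (x : GN (ESp d)) (y : GN ℂ) : Prop :=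
  ∃ w : moderateGroup (normFamily (ESp d)), (QuotientAddGroup.mk w : GN (ESp d)) = x ∧
    ∃ v : moderateGroup (normFamily ℂ), (QuotientAddGroup.mk v : GN ℂ) = y ∧
      ∀ᶠ ε in 𝓝[>] (0 : ℝ), (v : ℝ → ℂ) ε = f ε ((w : ℝ → ESp d) ε)

lemma norm_fderiv_le_norm_iteratedFDeriv_one {E' F' : Type*} [NormedAddCommGroup E']
    [NormedSpace ℝ E'] [NormedAddCommGroup F'] [NormedSpace ℝ F'] (g : E' → F') (x : E') :
    ‖fderiv ℝ g x‖ ≤ ‖iteratedFDeriv ℝ 1 g x‖ := by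
  refine ContinuousLinearMap.opNorm_le_bound _ (norm_nonneg _) fun v => ?_
  have h := (iteratedFDeriv ℝ 1 g x).le_opNorm (fun _ => v)
  simpa [iteratedFDeriv_one_apply] using h

/-- Representatives of the same class differ by a negligible net. -/
lemma negl_of_mk_eq_mk {V : Type*} [NormedAddCommGroup V] [NormedSpace ℝ V]
    {a b : moderateGroup (normFamily V)}
    (h : (QuotientAddGroup.mk a : GN V) = QuotientAddGroup.mk b) :
    ∀ m : ℕ, ∀ᶠ ε in 𝓝[>] (0 : ℝ), ‖(a : ℝ → V) ε - (b : ℝ → V) ε‖ ≤ ε ^ m := by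
  have h' : -a + b ∈ negligibleGroup (normFamily V) := (QuotientAddGroup.eq).mp h
  have h'' : IsNegligible (normFamily V) ((-a + b : moderateGroup (normFamily V)) : ℝ → V) := h'
  intro m
  filter_upwards [h'' () m] with ε hε
  have hco : ((-a + b : moderateGroup (normFamily V)) : ℝ → V) ε
      = -((a : ℝ → V) ε) + (b : ℝ → V) ε := rfl
  rw [normFamily_apply, hco] at hε
  rw [norm_sub_rev, ← neg_add_eq_sub]
  exact hε

/-- Moderateness of point values: if `w₁` stays (up to negligible perturbation) in a compact
`K ⊆ Ω`, then `(f_ε (w₁ ε))` is moderate. -/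
lemma value_moderate {d : ℕ} {Omega : Set (ESp d)} (hOmega : IsOpen Omega)
    {f : ℝ → ESp d → ℂ} (hf : GOmegaModerate Omega f)
    {K : Set (ESp d)} (hK : IsCompact K) (hKO : K ⊆ Omega)
    {w₀ w₁ : ℝ → ESp d} (h₀ : ∀ᶠ ε in 𝓝[>] (0 : ℝ), w₀ ε ∈ K)
    (h₁ : ∀ m : ℕ, ∀ᶠ ε in 𝓝[>] (0 : ℝ), ‖w₁ ε - w₀ ε‖ ≤ ε ^ m) :
    ∃ M : ℕ, ∀ᶠ ε in 𝓝[>] (0 : ℝ), ‖f ε (w₁ ε)‖ ≤ ε ^ (-(M : ℤ)) := by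
  obtain ⟨r, hr, hrsub⟩ := hK.exists_cthickening_subset_open hOmega hKO
  obtain ⟨M, hM⟩ := hf.2 (Metric.cthickening r K) hK.cthickening hrsub 0
  refine ⟨M, ?_⟩
  have hIoo : Set.Ioo (0 : ℝ) (min r 1) ∈ 𝓝[>] (0 : ℝ) :=
    Ioo_mem_nhdsGT_of_mem ⟨le_refl 0, lt_min hr one_pos⟩
  filter_upwards [hM, h₀, h₁ 1, hIoo] with ε hMε h0ε h1ε hεI
  have hmem : w₁ ε ∈ Metric.cthickening r K := by
    refine Metric.mem_cthickening_of_dist_le (w₁ ε) (w₀ ε) r K h0ε ?_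
    rw [dist_eq_norm]
    calc ‖w₁ ε - w₀ ε‖ ≤ ε ^ 1 := h1ε
      _ = ε := pow_one ε
      _ ≤ r := (hεI.2.le.trans (min_le_left _ _))
  have := hMε (w₁ ε) hmem
  rwa [norm_iteratedFDerivWithin_zero] at this

/-- Negligibility of the difference of point values at negligibly close points near a
compact `K ⊆ Ω`. -/
lemma value_negligible {d : ℕ} {Omega : Set (ESp d)} (hOmega : IsOpen Omega)
    {f : ℝ → ESp d → ℂ} (hf : GOmegaModerate Omega f)
    {K : Set (ESp d)} (hK : IsCompact K) (hKO : K ⊆ Omega)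
    {w₀ w₁ w₂ : ℝ → ESp d} (h₀ : ∀ᶠ ε in 𝓝[>] (0 : ℝ), w₀ ε ∈ K)
    (h₁ : ∀ m : ℕ, ∀ᶠ ε in 𝓝[>] (0 : ℝ), ‖w₁ ε - w₀ ε‖ ≤ ε ^ m)
    (h₂ : ∀ m : ℕ, ∀ᶠ ε in 𝓝[>] (0 : ℝ), ‖w₂ ε - w₀ ε‖ ≤ ε ^ m) :
    ∀ m : ℕ, ∀ᶠ ε in 𝓝[>] (0 : ℝ), ‖f ε (w₁ ε) - f ε (w₂ ε)‖ ≤ ε ^ m := by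
  obtain ⟨r, hr, hrsub⟩ := hK.exists_cthickening_subset_open hOmega hKO
  obtain ⟨M, hM⟩ := hf.2 (Metric.cthickening r K) hK.cthickening hrsub 1
  intro m
  have hIoo : Set.Ioo (0 : ℝ) (min r (1 / 2)) ∈ 𝓝[>] (0 : ℝ) :=
    Ioo_mem_nhdsGT_of_mem ⟨le_refl 0, lt_min hr (by norm_num)⟩
  filter_upwards [hM, h₀, h₁ (m + M + 1), h₂ (m + M + 1), hIoo] with ε hMε h0ε h1ε h2ε hεI
  obtain ⟨hε, hεr⟩ := hεI
  have hε1 : ε ≤ 1 / 2 := hεr.le.trans (min_le_right _ _)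
  have hεr' : ε ≤ r := hεr.le.trans (min_le_left _ _)
  have hpow_le : ε ^ (m + M + 1) ≤ ε := by
    calc ε ^ (m + M + 1) ≤ ε ^ 1 :=
          pow_le_pow_of_le_one hε.le (by linarith) (by omega)
      _ = ε := pow_one ε
  set s := Metric.closedBall (w₀ ε) r with hs
  have hsK : s ⊆ Metric.cthickening r K := fun z hz =>
    Metric.mem_cthickening_of_dist_le z (w₀ ε) r K h0ε (Metric.mem_closedBall.mp hz)
  have hsO : s ⊆ Omega := hsK.trans hrsub
  have hdiff : ∀ z ∈ s, DifferentiableAt ℝ (f ε) z := fun z hz =>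
    ((hf.1 ε).contDiffAt (hOmega.mem_nhds (hsO hz))).differentiableAt (by simp)
  have hbound : ∀ z ∈ s, ‖fderiv ℝ (f ε) z‖ ≤ ε ^ (-(M : ℤ)) := by
    intro z hz
    calc ‖fderiv ℝ (f ε) z‖ ≤ ‖iteratedFDeriv ℝ 1 (f ε) z‖ :=
          norm_fderiv_le_norm_iteratedFDeriv_one _ _
      _ = ‖iteratedFDerivWithin ℝ 1 (f ε) Omega z‖ := by
          rw [iteratedFDerivWithin_of_isOpen 1 hOmega (hsO hz)]
      _ ≤ ε ^ (-(M : ℤ)) := hMε z (hsK hz)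
  have hmem1 : w₁ ε ∈ s := by
    rw [hs, Metric.mem_closedBall, dist_eq_norm]
    exact h1ε.trans (hpow_le.trans hεr')
  have hmem2 : w₂ ε ∈ s := by
    rw [hs, Metric.mem_closedBall, dist_eq_norm]
    exact h2ε.trans (hpow_le.trans hεr')
  have hmvt := (convex_closedBall (w₀ ε) r).norm_image_sub_le_of_norm_fderiv_le
    hdiff hbound hmem2 hmem1
  have hd : ‖w₁ ε - w₂ ε‖ ≤ ε ^ (m + M) := by
    have tri : ‖w₁ ε - w₂ ε‖ ≤ ‖w₁ ε - w₀ ε‖ + ‖w₂ ε - w₀ ε‖ := by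
      have heq : w₁ ε - w₂ ε = (w₁ ε - w₀ ε) - (w₂ ε - w₀ ε) := by abel
      rw [heq]
      exact norm_sub_le _ _
    have : ε ^ (m + M + 1) + ε ^ (m + M + 1) ≤ ε ^ (m + M) := by
      have h' : ε ^ (m + M + 1) = ε ^ (m + M) * ε := pow_succ ε (m + M)
      nlinarith [pow_nonneg hε.le (m + M)]
    linarith [tri, h1ε, h2ε]
  calc ‖f ε (w₁ ε) - f ε (w₂ ε)‖ ≤ ε ^ (-(M : ℤ)) * ‖w₁ ε - w₂ ε‖ := hmvt
    _ ≤ ε ^ (-(M : ℤ)) * ε ^ (m + M) := by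
        apply mul_le_mul_of_nonneg_left hd
        positivity
    _ = ε ^ m := by
        rw [zpow_neg, zpow_natCast, pow_add]
        field_simp

/-- For `f ∈ 𝒢(Ω)` and an internal subset `A ⊆ Ω̃_c` of `ℝ̃^d`
(all points of `A` are compactly supported in `Ω`), the induced pointwise map
`f : A → ℂ̃` is internal, i.e. its graph `{(x, f(x)) : x ∈ A}` is an internal subset of
`ℝ̃^d × ℂ̃` (`≅ ℝ̃^{d+2}`). -/
theorem pointwise_map_internal {d : ℕ} (Omega : Set (ESp d)) (hOmega : IsOpen Omega)
    (f : ℝ → ESp d → ℂ) (hf : GOmegaModerate Omega f)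
    (Anet : ℝ → Set (ESp d))
    (hAc : ∀ x ∈ internalSet (normFamily (ESp d)) Anet,
      ∃ K : Set (ESp d), IsCompact K ∧ K ⊆ Omega ∧
        ∃ w : moderateGroup (normFamily (ESp d)),
          (QuotientAddGroup.mk w : GN (ESp d)) = x ∧
          ∀ᶠ ε in 𝓝[>] (0 : ℝ), (w : ℝ → ESp d) ε ∈ K) :
    IsInternalProd (normFamily (ESp d)) (normFamily ℂ)
      {z : GN (ESp d) × GN ℂ |
        z.1 ∈ internalSet (normFamily (ESp d)) Anet ∧ pointValue f z.1 z.2} := by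
  refine ⟨fun ε => (fun x => (x, f ε x)) '' Anet ε, ?_⟩
  ext z
  constructor
  · rintro ⟨hz1, hz2⟩
    obtain ⟨w₁, hw₁eq, hw₁mem⟩ := hz1
    obtain ⟨K, hK, hKO, w₀, hw₀eq, hw₀K⟩ := hAc z.1 ⟨w₁, hw₁eq, hw₁mem⟩
    obtain ⟨w₂, hw₂eq, v, hveq, hval⟩ := hz2
    have h₁ := negl_of_mk_eq_mk (hw₁eq.trans hw₀eq.symm)
    have h₂ := negl_of_mk_eq_mk (hw₂eq.trans hw₀eq.symm)
    obtain ⟨M₂, hM₂⟩ := value_moderate hOmega hf hK hKO hw₀K h₁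
    set P : ℝ → ESp d × ℂ :=
      fun ε => ((w₁ : ℝ → ESp d) ε, f ε ((w₁ : ℝ → ESp d) ε)) with hP
    have hPmod : IsModerate (prodSeminorm (normFamily (ESp d)) (normFamily ℂ)) P := by
      rintro ⟨i, j⟩
      obtain ⟨M₁, hM₁⟩ := w₁.2 ()
      refine ⟨max M₁ M₂, ?_⟩
      filter_upwards [hM₁, hM₂, small_mem] with ε hm1 hm2 hsm
      obtain ⟨hε, hε2⟩ := hsm
      have hinv : (1 : ℝ) ≤ ε⁻¹ := (one_le_inv₀ hε).2 (by linarith)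
      have key : ∀ k l : ℕ, k ≤ l → ε ^ (-(k : ℤ)) ≤ ε ^ (-(l : ℤ)) := by
        intro k l hkl
        rw [zpow_neg_natCast_eq, zpow_neg_natCast_eq]
        exact zpow_le_zpow_right₀ hinv (by exact_mod_cast hkl)
      rw [prodSeminorm_apply]
      have hm1' : ‖(w₁ : ℝ → ESp d) ε‖ ≤ ε ^ (-(M₁ : ℤ)) := hm1
      refine max_le ?_ ?_
      · exact (hm1'.trans (key M₁ _ (le_max_left _ _)))
      · exact (hm2.trans (key M₂ _ (le_max_right _ _)))
    set u : moderateGroup (prodSeminorm (normFamily (ESp d)) (normFamily ℂ)) :=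
      ⟨P, hPmod⟩ with hu
    refine ⟨QuotientAddGroup.mk u, ⟨u, rfl, ?_⟩, ?_⟩
    · filter_upwards [hw₁mem] with ε hε
      exact ⟨(w₁ : ℝ → ESp d) ε, hε, rfl⟩
    · have hIdent : prodIdent (normFamily (ESp d)) (normFamily ℂ) (QuotientAddGroup.mk u)
          = (QuotientAddGroup.mk (prodFstAux (normFamily (ESp d)) (normFamily ℂ) u),
             QuotientAddGroup.mk (prodSndAux (normFamily (ESp d)) (normFamily ℂ) u)) := rfl
      rw [hIdent]
      have hfst : prodFstAux (normFamily (ESp d)) (normFamily ℂ) u = w₁ := by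
        apply Subtype.ext; funext ε; rfl
      refine Prod.ext ?_ ?_
      · show QuotientAddGroup.mk (prodFstAux (normFamily (ESp d)) (normFamily ℂ) u) = z.1
        rw [hfst]
        exact hw₁eq
      · show QuotientAddGroup.mk (prodSndAux (normFamily (ESp d)) (normFamily ℂ) u) = z.2
        rw [← hveq]
        refine (QuotientAddGroup.eq).mpr ?_
        show IsNegligible (normFamily ℂ) _
        intro i m
        have hneg := value_negligible hOmega hf hK hKO hw₀K h₁ h₂ m
        filter_upwards [hneg, hval] with ε hne hva
        have hco : ((-(prodSndAux (normFamily (ESp d)) (normFamily ℂ) u) + v :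
            moderateGroup (normFamily ℂ)) : ℝ → ℂ) ε
            = -(f ε ((w₁ : ℝ → ESp d) ε)) + (v : ℝ → ℂ) ε := rfl
        rw [normFamily_apply, hco, hva, neg_add_eq_sub, norm_sub_rev]
        exact hne
  · rintro ⟨uq, ⟨w, hweq, hwmem⟩, rfl⟩
    subst hweq
    have hIdent : prodIdent (normFamily (ESp d)) (normFamily ℂ) (QuotientAddGroup.mk w)
        = (QuotientAddGroup.mk (prodFstAux (normFamily (ESp d)) (normFamily ℂ) w),
           QuotientAddGroup.mk (prodSndAux (normFamily (ESp d)) (normFamily ℂ) w)) := rfl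
    rw [hIdent]
    have hmem' : ∀ᶠ ε in 𝓝[>] (0 : ℝ), ((w : ℝ → ESp d × ℂ) ε).1 ∈ Anet ε ∧
        ((w : ℝ → ESp d × ℂ) ε).2 = f ε (((w : ℝ → ESp d × ℂ) ε).1) := by
      filter_upwards [hwmem] with ε hε
      obtain ⟨a, ha, heq⟩ := hε
      have h1 : ((w : ℝ → ESp d × ℂ) ε).1 = a := by rw [← heq]
      have h2 : ((w : ℝ → ESp d × ℂ) ε).2 = f ε a := by rw [← heq]
      exact ⟨h1 ▸ ha, by rw [h2, h1]⟩
    constructor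
    · exact ⟨prodFstAux (normFamily (ESp d)) (normFamily ℂ) w, rfl,
        by filter_upwards [hmem'] with ε h; exact h.1⟩
    · exact ⟨prodFstAux (normFamily (ESp d)) (normFamily ℂ) w, rfl,
        prodSndAux (normFamily (ESp d)) (normFamily ℂ) w, rfl,
        by filter_upwards [hmem'] with ε h; exact h.2⟩

end ColombeauPaper
end
end

section
/- There exists an element ψ ∈ G(ℝ^d) such that ∫ψ(x)dx = 1 in R̃, ∫x^β ψ(x)dx = 0 in R̃ for every multi-index β with |β| ≥ 1, and supp ψ ⊆ {x∈ℝ^d : |x| ≤ 1}. Concretely: there exists a moderate net (ψ_ε)_ε of smooth functions ψ_ε ∈ C^∞(ℝ^d), each supported in the closed unit ball {|x| ≤ 1}, such that the net (∫ψ_ε(x)dx − 1)_ε is negligible and, for every multi-index β with |β| ≥ 1, the net (∫x^β ψ_ε(x)dx)_ε is negligible. -/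
open Filter Topology MeasureTheory

/-- A negligible net of real numbers. -/
def IsNegligibleR (n : ℝ → ℝ) : Prop :=
  ∀ m : ℕ, ∀ᶠ ε in 𝓝[>] (0 : ℝ), |n ε| ≤ ε ^ m

/-- A net of smooth functions on `ℝ^d`, moderate in the sense of the Colombeau algebra
`𝒢(ℝ^d)`: on every compact set, every derivative grows at most like some `ε^{-M}`. -/
def GModerate {d : ℕ} (f : ℝ → EuclideanSpace ℝ (Fin d) → ℝ) : Prop :=
  ∀ K : Set (EuclideanSpace ℝ (Fin d)), IsCompact K → ∀ j : ℕ, ∃ M : ℕ,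
    ∀ᶠ ε in 𝓝[>] (0 : ℝ), ∀ x ∈ K, ‖iteratedFDeriv ℝ j (f ε) x‖ ≤ ε ^ (-(M : ℤ))

namespace GenMollifierAux

open Function Set

/-- The integral of the derivative of a compactly supported `C¹` function vanishes. -/
lemma integral_deriv_zero {f : ℝ → ℝ} (hf : ContDiff ℝ 1 f) (h2 : HasCompactSupport f) :
    (∫ x, deriv f x) = 0 := by
  have h3 : Continuous (deriv f) := hf.continuous_deriv le_rfl
  have hi : Integrable (deriv f) := h3.integrable_of_hasCompactSupport h2.deriv
  have h4 := intervalIntegral.integral_Iic_add_Ioi (b := (0:ℝ)) hi.integrableOn hi.integrableOn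
  rw [← h4, HasCompactSupport.integral_Iic_deriv_eq hf h2 0,
    HasCompactSupport.integral_Ioi_deriv_eq hf h2 0]
  ring

/-- Integration by parts for a smooth function against a compactly supported smooth one. -/
lemma integral_mul_deriv {f g : ℝ → ℝ} (hf : ContDiff ℝ (⊤:ℕ∞) f) (hg : ContDiff ℝ (⊤:ℕ∞) g)
    (h2 : HasCompactSupport g) :
    (∫ x, f x * deriv g x) = - ∫ x, deriv f x * g x := by
  have hfg : ContDiff ℝ 1 (fun x => f x * g x) := (hf.mul hg).of_le (by exact_mod_cast le_top)
  have hcs : HasCompactSupport (fun x => f x * g x) := h2.mul_left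
  have h0 : (∫ x, deriv (fun y => f y * g y) x) = 0 := integral_deriv_zero hfg hcs
  have hd : ∀ x : ℝ, deriv (fun y => f y * g y) x = deriv f x * g x + f x * deriv g x := by
    intro x
    exact deriv_fun_mul ((hf.differentiable (by simp)).differentiableAt)
      ((hg.differentiable (by simp)).differentiableAt)
  have i1 : Integrable (fun x => deriv f x * g x) :=
    ((hf.continuous_deriv (by exact_mod_cast le_top : (1:WithTop ℕ∞) ≤ (⊤:ℕ∞))).mul hg.continuous).integrable_of_hasCompactSupport h2.mul_left
  have i2 : Integrable (fun x => f x * deriv g x) :=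
    (hf.continuous.mul (hg.continuous_deriv (by exact_mod_cast le_top : (1:WithTop ℕ∞) ≤ (⊤:ℕ∞)))).integrable_of_hasCompactSupport
      h2.deriv.mul_left
  have h5 : (∫ x, (deriv f x * g x + f x * deriv g x)) =
      (∫ x, deriv f x * g x) + ∫ x, f x * deriv g x := integral_add i1 i2
  have h6 : (∫ x, deriv (fun y => f y * g y) x) =
      (∫ x, deriv f x * g x) + ∫ x, f x * deriv g x := by
    rw [← h5]; exact integral_congr_ae (Filter.Eventually.of_forall (fun x => hd x))
  rw [h6] at h0
  linarith

lemma hasCompactSupport_iteratedDeriv {h : ℝ → ℝ} (hc : HasCompactSupport h) (j : ℕ) :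
    HasCompactSupport (iteratedDeriv j h) := by
  induction j with
  | zero => simpa [iteratedDeriv_zero] using hc
  | succ n ih => rw [iteratedDeriv_succ]; exact ih.deriv

lemma contDiff_iteratedDeriv {h : ℝ → ℝ} (hs : ContDiff ℝ (⊤:ℕ∞) h) (j : ℕ) :
    ContDiff ℝ (⊤:ℕ∞) (iteratedDeriv j h) := by
  rw [iteratedDeriv_eq_iterate]
  exact hs.iterate_deriv j

/-- Moments of iterated derivatives of a compactly supported smooth function. -/
lemma moment_iteratedDeriv {h : ℝ → ℝ} (hs : ContDiff ℝ (⊤:ℕ∞) h) (hc : HasCompactSupport h) :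
    ∀ j k : ℕ, k ≤ j →
      (∫ t : ℝ, t ^ k * iteratedDeriv j h t) =
        if k = j then (-1 : ℝ) ^ j * (Nat.factorial j) * ∫ t : ℝ, h t else 0 := by
  intro j
  induction j with
  | zero =>
    intro k hk
    interval_cases k
    simp [iteratedDeriv_zero]
  | succ n ih =>
    intro k hk
    have hG : ContDiff ℝ (⊤:ℕ∞) (iteratedDeriv n h) := contDiff_iteratedDeriv hs n
    have hGc : HasCompactSupport (iteratedDeriv n h) := hasCompactSupport_iteratedDeriv hc n
    have hpow : ContDiff ℝ (⊤:ℕ∞) (fun t : ℝ => t ^ k) := contDiff_id.pow k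
    have step : (∫ t : ℝ, t ^ k * iteratedDeriv (n + 1) h t) =
        - ∫ t : ℝ, deriv (fun s : ℝ => s ^ k) t * iteratedDeriv n h t := by
      rw [show iteratedDeriv (n + 1) h = deriv (iteratedDeriv n h) from iteratedDeriv_succ]
      exact integral_mul_deriv hpow hG hGc
    rw [step]
    have hder : ∀ t : ℝ, deriv (fun s : ℝ => s ^ k) t = (k : ℝ) * t ^ (k - 1) := by
      intro t; simp [deriv_pow]
    have step2 : (∫ t : ℝ, deriv (fun s : ℝ => s ^ k) t * iteratedDeriv n h t) =
        (k : ℝ) * ∫ t : ℝ, t ^ (k - 1) * iteratedDeriv n h t := by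
      rw [← integral_const_mul _ _]
      congr 1
      ext t
      rw [hder t, mul_assoc]
    rw [step2]
    rcases Nat.eq_zero_or_pos k with hk0 | hk0
    · subst hk0
      simp
    · obtain ⟨m, rfl⟩ : ∃ m, k = m + 1 := ⟨k - 1, (Nat.succ_pred_eq_of_pos hk0).symm⟩
      have hmn : m ≤ n := Nat.lt_succ_iff.mp hk
      rw [show m + 1 - 1 = m from rfl, ih m hmn]
      by_cases hmeq : m = n
      · subst hmeq
        rw [if_pos rfl, if_pos rfl]
        rw [Nat.factorial_succ]
        push_cast
        ring
      · rw [if_neg hmeq, if_neg (by omega)]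
        ring

/-- One-dimensional mollifiers with vanishing moments up to order `n`,
supported in the closed ball of radius `r`. -/
lemma oneD (r : ℝ) (hr : 0 < r) (n : ℕ) :
    ∃ g : ℝ → ℝ, ContDiff ℝ (⊤:ℕ∞) g ∧ support g ⊆ Metric.closedBall 0 r ∧
      (∫ t : ℝ, g t) = 1 ∧ ∀ k : ℕ, 1 ≤ k → k ≤ n → (∫ t : ℝ, t ^ k * g t) = 0 := by
  have hφ : ∃ φ : ContDiffBump (0 : ℝ), φ.rOut = r := by
    refine ⟨⟨r / 2, r, by positivity, by linarith⟩, rfl⟩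
  obtain ⟨φ, hφr⟩ := hφ
  set b : ℝ → ℝ := φ.normed volume with hb
  have hb_smooth : ContDiff ℝ (⊤:ℕ∞) b := φ.contDiff_normed
  have hb_supp : support b ⊆ Metric.closedBall 0 r := by
    rw [hb, φ.support_normed_eq, hφr]
    exact Metric.ball_subset_closedBall
  have hb_cs : HasCompactSupport b := φ.hasCompactSupport_normed
  have hb_int : (∫ t : ℝ, b t) = 1 := φ.integral_normed
  induction n with
  | zero =>
    exact ⟨b, hb_smooth, hb_supp, hb_int, fun k hk1 hk0 => by omega⟩
  | succ n ih =>
    obtain ⟨g, hg_smooth, hg_supp, hg_int, hg_mom⟩ := ih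
    have hg_cs : HasCompactSupport g :=
      HasCompactSupport.intro (isCompact_closedBall 0 r)
        (fun x hx => by_contra fun h0 => hx (hg_supp h0))
    set u : ℝ → ℝ := iteratedDeriv (n + 1) b with hu
    have hu_smooth : ContDiff ℝ (⊤:ℕ∞) u := contDiff_iteratedDeriv hb_smooth (n + 1)
    have hu_cs : HasCompactSupport u := hasCompactSupport_iteratedDeriv hb_cs (n + 1)
    have hu_supp : support u ⊆ Metric.closedBall 0 r := by
      have key : ∀ j : ℕ, support (iteratedDeriv j b) ⊆ Metric.closedBall 0 r := by
        intro j
        induction j with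
        | zero => simpa [iteratedDeriv_zero] using hb_supp
        | succ m ihm =>
          rw [iteratedDeriv_succ]
          refine subset_trans (support_deriv_subset) ?_
          exact closure_minimal ihm Metric.isClosed_closedBall
      exact key (n + 1)
    have hu_mom := moment_iteratedDeriv hb_smooth hb_cs (n + 1)
    set c : ℝ := (∫ t : ℝ, t ^ (n + 1) * g t) / ((-1 : ℝ) ^ (n + 1) * (Nat.factorial (n + 1)))
      with hc
    refine ⟨fun t => g t - c * u t, hg_smooth.sub (contDiff_const.mul hu_smooth), ?_, ?_, ?_⟩
    · intro x hx
      rcases Classical.em (g x = 0) with h1 | h1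
      · have : u x ≠ 0 := by
          intro h2
          apply hx
          simp [h1, h2]
        exact hu_supp this
      · exact hg_supp h1
    · -- integral equals 1
      have i1 : Integrable g := hg_smooth.continuous.integrable_of_hasCompactSupport hg_cs
      have i2 : Integrable (fun t => c * u t) :=
        ((hu_smooth.continuous).integrable_of_hasCompactSupport hu_cs).const_mul c
      rw [integral_sub i1 i2, hg_int, integral_const_mul _ _]
      have := hu_mom 0 (by omega)
      rw [if_neg (by omega)] at this
      simp only [pow_zero, one_mul] at this
      rw [this]
      ring
    · intro k hk1 hkn
      have i1 : Integrable (fun t : ℝ => t ^ k * g t) :=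
        ((continuous_pow k).mul hg_smooth.continuous).integrable_of_hasCompactSupport
          hg_cs.mul_left
      have i2 : Integrable (fun t : ℝ => t ^ k * (c * u t)) := by
        have : Integrable (fun t : ℝ => t ^ k * u t) :=
          ((continuous_pow k).mul hu_smooth.continuous).integrable_of_hasCompactSupport
            hu_cs.mul_left
        simpa [mul_comm, mul_assoc, mul_left_comm] using this.const_mul c
      have expand : (∫ t : ℝ, t ^ k * (g t - c * u t)) =
          (∫ t : ℝ, t ^ k * g t) - c * ∫ t : ℝ, t ^ k * u t := by
        have : (fun t : ℝ => t ^ k * (g t - c * u t)) =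
            fun t : ℝ => t ^ k * g t - t ^ k * (c * u t) := by
          ext t; ring
        rw [this, integral_sub i1 i2]
        congr 1
        rw [← integral_const_mul _ _]
        congr 1; ext t; ring
      rw [expand]
      rcases Nat.lt_or_ge k (n + 1) with hlt | hge
      · have h1 : (∫ t : ℝ, t ^ k * g t) = 0 := hg_mom k hk1 (by omega)
        have h2 : (∫ t : ℝ, t ^ k * u t) = 0 := by
          have := hu_mom k (by omega)
          rwa [if_neg (by omega)] at this
        rw [h1, h2]; ring
      · have hkeq : k = n + 1 := by omega
        subst hkeq
        have h2 : (∫ t : ℝ, t ^ (n + 1) * u t) =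
            (-1 : ℝ) ^ (n + 1) * (Nat.factorial (n + 1)) := by
          have := hu_mom (n + 1) le_rfl
          rw [if_pos rfl, hb_int] at this
          simpa using this
        rw [h2, hc]
        have hne : ((-1 : ℝ) ^ (n + 1) * (Nat.factorial (n + 1))) ≠ 0 := by
          apply mul_ne_zero
          · exact pow_ne_zero _ (by norm_num)
          · exact_mod_cast Nat.factorial_ne_zero (n + 1)
        field_simp
        ring
      -- end
  -- end oneD

/-- `d`-dimensional mollifiers with vanishing moments up to order `n`. -/
lemma euclid_prod_integral (d : ℕ) (F : Fin d → ℝ → ℝ) :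
    (∫ x : EuclideanSpace ℝ (Fin d), ∏ i, F i (x i)) = ∏ i, ∫ t : ℝ, F i t := by
  have e := (EuclideanSpace.volume_preserving_symm_measurableEquiv_toLp (Fin d)).symm
  rw [← e.integral_comp (MeasurableEquiv.measurableEmbedding _)]
  have : ∀ y : Fin d → ℝ,
      (∏ i, F i (((MeasurableEquiv.toLp 2 (Fin d → ℝ)) y) i)) = ∏ i, F i (y i) := by
    intro y
    congr 1
  calc (∫ y : Fin d → ℝ, ∏ i, F i (((MeasurableEquiv.toLp 2 (Fin d → ℝ)) y) i))
      = ∫ y : Fin d → ℝ, ∏ i, F i (y i) := by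
        refine integral_congr_ae (Filter.Eventually.of_forall fun y => this y)
    _ = ∏ i, ∫ t : ℝ, F i t := MeasureTheory.integral_fintype_prod_eq_prod F

lemma dD (d n : ℕ) :
    ∃ Ψ : EuclideanSpace ℝ (Fin d) → ℝ,
      ContDiff ℝ (⊤ : ℕ∞) Ψ ∧ support Ψ ⊆ Metric.closedBall 0 1 ∧
      (∫ x, Ψ x) = 1 ∧
      ∀ β : Fin d → ℕ, (∃ i, 1 ≤ β i ∧ β i ≤ n) →
        (∫ x, (∏ i, (x i) ^ (β i)) * Ψ x) = 0 := by
  set r : ℝ := 1 / ((d : ℝ) + 1) with hrdef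
  have hr : 0 < r := by positivity
  obtain ⟨g, hg_smooth, hg_supp, hg_int, hg_mom⟩ := oneD r hr n
  refine ⟨fun x => ∏ i, g (x i), ?_, ?_, ?_, ?_⟩
  · exact contDiff_prod fun i _ =>
      hg_smooth.comp (EuclideanSpace.proj (𝕜 := ℝ) (i : Fin d)).contDiff
  · intro x hx
    simp only [Function.mem_support] at hx
    have hxi : ∀ i, g (x i) ≠ 0 := by
      intro i
      exact Finset.prod_ne_zero_iff.mp hx i (Finset.mem_univ i)
    have hxi' : ∀ i, |x i| ≤ r := by
      intro i
      have := hg_supp (hxi i)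
      simpa [Real.dist_eq] using this
    have hnorm : ‖x‖ ≤ 1 := by
      rw [EuclideanSpace.norm_eq]
      have hsum : (∑ i, ‖x i‖ ^ 2) ≤ (d : ℝ) * r ^ 2 := by
        calc (∑ i, ‖x i‖ ^ 2) ≤ ∑ _i : Fin d, r ^ 2 := by
              refine Finset.sum_le_sum fun i _ => ?_
              have h1 : ‖x i‖ ≤ r := by simpa [Real.norm_eq_abs] using hxi' i
              exact pow_le_pow_left₀ (norm_nonneg _) h1 2
          _ = (d : ℝ) * r ^ 2 := by simp [Finset.sum_const, mul_comm]
      have hdr : (d : ℝ) * r ^ 2 ≤ 1 := by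
        have hd0 : (0 : ℝ) ≤ (d : ℝ) := Nat.cast_nonneg d
        rw [hrdef, div_pow, one_pow, mul_one_div, div_le_one (by positivity)]
        nlinarith
      have := Real.sqrt_le_sqrt (le_trans hsum hdr)
      simpa using this
    simpa [Metric.mem_closedBall, dist_zero_right] using hnorm
  · have := euclid_prod_integral d (fun _ => g)
    simp only [hg_int, Finset.prod_const_one] at this
    simpa using this
  · rintro β ⟨i0, hi1, hi2⟩
    have key : (∫ x : EuclideanSpace ℝ (Fin d), (∏ i, (x i) ^ (β i)) * ∏ i, g (x i)) =
        ∏ i, ∫ t : ℝ, t ^ (β i) * g t := by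
      rw [← euclid_prod_integral d (fun i t => t ^ (β i) * g t)]
      refine integral_congr_ae (Filter.Eventually.of_forall fun x => ?_)
      simp [Finset.prod_mul_distrib]
    rw [key]
    exact Finset.prod_eq_zero (Finset.mem_univ i0) (hg_mom (β i0) hi1 hi2)

end GenMollifierAux

/-- There is a generalized mollifier `ψ ∈ 𝒢(ℝ^d)`, given by a moderate
net `(ψ_ε)` of smooth functions supported in the closed unit ball, with `∫ ψ = 1` in `ℝ̃`
and `∫ x^β ψ(x) dx = 0` in `ℝ̃` for all multi-indices `β` with `|β| ≥ 1`. -/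
theorem exists_generalized_mollifier (d : ℕ) :
    ∃ ψ : ℝ → EuclideanSpace ℝ (Fin d) → ℝ,
      (∀ ε, ContDiff ℝ (⊤ : ℕ∞) (ψ ε)) ∧
      (∀ ε, Function.support (ψ ε) ⊆ Metric.closedBall 0 1) ∧
      GModerate ψ ∧
      IsNegligibleR (fun ε => (∫ x, ψ ε x) - 1) ∧
      (∀ β : Fin d → ℕ, 1 ≤ ∑ i, β i →
        IsNegligibleR (fun ε => ∫ x, (∏ i, (x i) ^ (β i)) * ψ ε x)) := by
  classical
  choose Ψ hS hsupp hint hmom using fun n => GenMollifierAux.dD d n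
  have hcs : ∀ n, HasCompactSupport (Ψ n) := fun n =>
    HasCompactSupport.intro (isCompact_closedBall 0 1)
      (fun x hx => by_contra fun h0 => hx (hsupp n h0))
  have hbound : ∀ n j : ℕ, ∃ C : ℝ, ∀ x, ‖iteratedFDeriv ℝ j (Ψ n) x‖ ≤ C := fun n j =>
    ((hcs n).iteratedFDeriv j).exists_bound_of_continuous
      ((hS n).continuous_iteratedFDeriv (by exact_mod_cast le_top))
  choose C hC using hbound
  set D : ℕ → ℕ := fun n => (Finset.range (n + 1)).sup
    (fun m => (Finset.range (n + 1)).sup (fun j => Nat.ceil (C m j))) with hDdef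
  have hD : ∀ {m j n : ℕ}, m ≤ n → j ≤ n → ∀ x, ‖iteratedFDeriv ℝ j (Ψ m) x‖ ≤ (D n : ℝ) := by
    intro m j n hm hj x
    have h1 : ‖iteratedFDeriv ℝ j (Ψ m) x‖ ≤ C m j := hC m j x
    have h2 : Nat.ceil (C m j) ≤ D n := by
      refine le_trans (Finset.le_sup (s := Finset.range (n + 1))
        (f := fun j' => Nat.ceil (C m j')) (Finset.mem_range.mpr (by omega))) ?_
      exact Finset.le_sup (s := Finset.range (n + 1))
        (f := fun m' => (Finset.range (n + 1)).sup (fun j' => Nat.ceil (C m' j')))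
        (Finset.mem_range.mpr (by omega))
    calc ‖iteratedFDeriv ℝ j (Ψ m) x‖ ≤ C m j := h1
      _ ≤ (Nat.ceil (C m j) : ℝ) := Nat.le_ceil _
      _ ≤ (D n : ℝ) := by exact_mod_cast h2
  have hDmono : ∀ {n n' : ℕ}, n ≤ n' → D n ≤ D n' := by
    intro n n' h
    refine Finset.sup_le fun m hm => ?_
    refine le_trans (Finset.sup_mono (Finset.range_subset_range.mpr (by omega)))
      (Finset.le_sup (f := fun m' => (Finset.range (n' + 1)).sup
        (fun j' => Nat.ceil (C m' j'))) ?_)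
    exact Finset.mem_range.mpr (by simp only [Finset.mem_range] at hm; omega)
  set a : ℕ → ℝ := fun n => min ((1 / 2 : ℝ) ^ n) (1 / ((D n : ℝ) + 1)) with hadef
  have ha_pos : ∀ n, 0 < a n := fun n => lt_min (by positivity) (by positivity)
  have ha_le_pow : ∀ n, a n ≤ (1 / 2 : ℝ) ^ n := fun n => min_le_left _ _
  have ha_le_inv : ∀ n, a n ≤ 1 / ((D n : ℝ) + 1) := fun n => min_le_right _ _
  set N : ℝ → ℕ := fun ε => sSup {n : ℕ | ε ≤ a n} with hNdef
  -- the key property of `N`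
  have hN : ∀ {ε : ℝ} {K : ℕ}, 0 < ε → ε ≤ a K → K ≤ N ε ∧ ε ≤ a (N ε) := by
    intro ε K hε hεK
    obtain ⟨n0, hn0⟩ : ∃ n0 : ℕ, (1 / 2 : ℝ) ^ n0 < ε :=
      exists_pow_lt_of_lt_one hε (by norm_num)
    have hub : ∀ n ∈ {n : ℕ | ε ≤ a n}, n ≤ n0 := by
      intro n hn
      by_contra hcon
      have hnn : n0 ≤ n := by omega
      have h1 : a n ≤ (1 / 2 : ℝ) ^ n := ha_le_pow n
      have h2 : (1 / 2 : ℝ) ^ n ≤ (1 / 2 : ℝ) ^ n0 :=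
        pow_le_pow_of_le_one (by norm_num) (by norm_num) hnn
      have : ε ≤ a n := hn
      linarith
    have hbdd : BddAbove {n : ℕ | ε ≤ a n} := ⟨n0, fun n hn => hub n hn⟩
    have hne : {n : ℕ | ε ≤ a n}.Nonempty := ⟨K, hεK⟩
    exact ⟨le_csSup hbdd hεK, Nat.sSup_mem hne hbdd⟩
  refine ⟨fun ε => Ψ (N ε), fun ε => hS _, fun ε => hsupp _, ?_, ?_, ?_⟩
  · -- moderateness
    intro K _hK j
    refine ⟨1, ?_⟩
    filter_upwards [Ioc_mem_nhdsGT (ha_pos j)] with ε hε x _hx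
    obtain ⟨hj_le, hεa⟩ := hN hε.1 hε.2
    set n := N ε with hn
    have h1 : ‖iteratedFDeriv ℝ j (Ψ n) x‖ ≤ (D n : ℝ) := hD le_rfl hj_le x
    have h2 : ε ≤ 1 / ((D n : ℝ) + 1) := le_trans hεa (ha_le_inv n)
    have hc : (0 : ℝ) < (D n : ℝ) + 1 := by positivity
    have h3 : ε * ((D n : ℝ) + 1) ≤ 1 := by
      calc ε * ((D n : ℝ) + 1) ≤ (1 / ((D n : ℝ) + 1)) * ((D n : ℝ) + 1) :=
            mul_le_mul_of_nonneg_right h2 hc.le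
        _ = 1 := by field_simp
    have h4 : (D n : ℝ) + 1 ≤ ε⁻¹ := by
      rw [← one_div ε, le_div_iff₀ hε.1]
      linarith
    have h5 : ε ^ (-((1 : ℕ) : ℤ)) = ε⁻¹ := by
      norm_num
    rw [h5]
    linarith
  · -- integral equals one
    intro m
    filter_upwards [self_mem_nhdsWithin] with ε hε
    have : (∫ x, Ψ (N ε) x) - 1 = 0 := by rw [hint]; ring
    rw [this]
    simp only [abs_zero]
    exact pow_nonneg (le_of_lt hε) m
  · -- vanishing moments
    intro β hβ
    intro m
    filter_upwards [Ioc_mem_nhdsGT (ha_pos (∑ i, β i))] with ε hε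
    obtain ⟨hs_le, _⟩ := hN hε.1 hε.2
    obtain ⟨i0, hi0⟩ : ∃ i0, 1 ≤ β i0 := by
      by_contra hcon
      push_neg at hcon
      have : (∑ i, β i) = 0 := Finset.sum_eq_zero fun i _ => by have := hcon i; omega
      omega
    have hle : β i0 ≤ N ε := le_trans
      (Finset.single_le_sum (f := β) (fun i _ => Nat.zero_le _) (Finset.mem_univ i0)) hs_le
    have h0 : (∫ x, (∏ i, (x i) ^ (β i)) * Ψ (N ε) x) = 0 :=
      hmom (N ε) β ⟨i0, hi0, hle⟩
    rw [h0]
    simp only [abs_zero]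
    exact pow_nonneg hε.1.le m
end

section
/- (Spherical completeness of R̃ and C̃) Let K̃ be R̃ or C̃. Let (B_n)_{n∈ℕ} be a decreasing chain B_1 ⊇ B_2 ⊇ ⋯ of sharp balls B_n = {x ∈ K̃ : |x − a_n|_s ≤ r_n}, where a_n ∈ K̃ and r_n are positive real numbers. Then ⋂_{n∈ℕ} B_n ≠ ∅. -/
open Filter Topology Asymptotics

noncomputable section

namespace ColombeauPaper

variable {ι κ : Type*} {E : Type*} [AddCommGroup E] [Module ℝ E]
  {F : Type*} [AddCommGroup F] [Module ℝ F]

section SphericalCompleteness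

variable {K : Type*} [RCLike K]

lemma sum_rpow_le {ε a b d : ℝ} (hε : 0 < ε) (hε2 : ε ≤ 1 / 2)
    (ha : d + 1 ≤ a) (hb : d + 1 ≤ b) : ε ^ a + ε ^ b ≤ ε ^ d := by
  have hε1 : ε ≤ 1 := by linarith
  have hd : (0 : ℝ) < ε ^ d := Real.rpow_pos_of_pos hε d
  have h1 : ε ^ a ≤ ε ^ (d + 1) := Real.rpow_le_rpow_of_exponent_ge hε hε1 ha
  have h2 : ε ^ b ≤ ε ^ (d + 1) := Real.rpow_le_rpow_of_exponent_ge hε hε1 hb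
  have h3 : ε ^ (d + 1) = ε ^ d * ε := by rw [Real.rpow_add hε, Real.rpow_one]
  nlinarith

lemma sharpSemi_le_exp {u : GN K} (w : moderateGroup (normFamily K)) (b : ℝ)
    (hmk : (QuotientAddGroup.mk w : GN K) = u)
    (hb : ∀ᶠ ε in 𝓝[>] (0 : ℝ), ‖(w : ℝ → K) ε‖ ≤ ε ^ b) :
    sharpSemi (normFamily K) () u ≤ Real.exp (-b) := by
  have hO : (fun ε => ((normFamily K ()) ((w : ℝ → K) ε) : ℝ)) =O[𝓝[>] (0 : ℝ)]
      fun ε => ε ^ b := by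
    refine IsBigO.of_bound 1 ?_
    filter_upwards [hb, self_mem_nhdsWithin] with ε h1 h2
    have hε : (0 : ℝ) < ε := h2
    simp only [coe_normSeminorm, Real.norm_eq_abs, one_mul]
    rw [abs_of_nonneg (norm_nonneg _), abs_of_nonneg (Real.rpow_nonneg hε.le b)]
    exact h1
  unfold sharpSemi
  apply csInf_le
  · refine ⟨0, ?_⟩
    rintro s ⟨b', w', -, rfl, -⟩
    exact (Real.exp_pos _).le
  · exact ⟨b, w, hmk, rfl, hO⟩

set_option maxHeartbeats 1000000 in
lemma eventually_le_of_sharpSemi_le {u : GN K} (w : moderateGroup (normFamily K))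
    (hmk : (QuotientAddGroup.mk w : GN K) = u) {R δ : ℝ} (hR : 0 < R) (hδ : 0 < δ)
    (hle : sharpSemi (normFamily K) () u ≤ R) :
    ∀ᶠ ε in 𝓝[>] (0 : ℝ), ‖(w : ℝ → K) ε‖ ≤ ε ^ (-Real.log R - δ) := by
  set c : ℝ := -Real.log R with hc
  unfold sharpSemi at hle
  have hne : {r' : ℝ | ∃ (b : ℝ) (w' : moderateGroup (normFamily K)),
      (QuotientAddGroup.mk w' : GN K) = u ∧ r' = Real.exp (-b) ∧
      (fun ε => ((normFamily K ()) ((w' : ℝ → K) ε) : ℝ)) =O[𝓝[>] (0 : ℝ)]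
        fun ε => ε ^ b}.Nonempty := by
    obtain ⟨M, hM⟩ := w.2 ()
    refine ⟨Real.exp (-(-(M : ℝ))), -(M : ℝ), w, hmk, rfl, ?_⟩
    refine IsBigO.of_bound 1 ?_
    filter_upwards [hM, self_mem_nhdsWithin] with ε h1 h2
    have hε : (0 : ℝ) < ε := h2
    simp only [coe_normSeminorm, Real.norm_eq_abs, one_mul]
    rw [abs_of_nonneg (norm_nonneg _), abs_of_nonneg (Real.rpow_nonneg hε.le _)]
    calc ‖(w : ℝ → K) ε‖ ≤ ε ^ (-(M : ℤ)) := h1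
      _ = ε ^ (-(M : ℝ)) := by rw [← Real.rpow_intCast]; norm_num
  have hRlt : R < Real.exp (-(c - δ / 2)) := by
    have h1 : Real.exp (-(c - δ / 2)) = R * Real.exp (δ / 2) := by
      rw [hc, show -(-Real.log R - δ / 2) = Real.log R + δ / 2 by ring, Real.exp_add,
        Real.exp_log hR]
    rw [h1]
    nlinarith [hR, hδ, Real.add_one_le_exp (δ / 2)]
  have hlt := lt_of_le_of_lt hle hRlt
  obtain ⟨s, hsS, hslt⟩ := exists_lt_of_csInf_lt hne hlt
  obtain ⟨b, w', hmk', rfl, hO⟩ := hsS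
  have hbgt : c - δ / 2 < b := by
    have h := Real.exp_lt_exp.mp hslt
    linarith
  obtain ⟨C, hC, hCb⟩ := hO.exists_pos
  have hCb' := hCb.bound
  have hmm : (QuotientAddGroup.mk w : GN K) = QuotientAddGroup.mk w' := by rw [hmk, hmk']
  have hnegmem : -w + w' ∈ negligibleGroup (normFamily K) := QuotientAddGroup.eq.mp hmm
  have hneg : IsNegligible (normFamily K)
      ((-w + w' : moderateGroup (normFamily K)) : ℝ → K) := hnegmem
  set m : ℕ := Nat.ceil |c| with hm
  have hmc : c - δ / 2 ≤ (m : ℝ) :=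
    le_trans (by linarith [le_abs_self c]) (Nat.le_ceil _)
  set t₀ : ℝ := ((C + 1)⁻¹) ^ (2 / δ) with ht₀def
  have ht₀ : 0 < t₀ := Real.rpow_pos_of_pos (by positivity) _
  have hmem : Set.Ioc (0 : ℝ) (min (1 / 2) t₀) ∈ 𝓝[>] (0 : ℝ) :=
    Ioc_mem_nhdsGT_of_mem ⟨le_rfl, by positivity⟩
  filter_upwards [hCb', hneg () m, hmem] with ε h1 h2 h3
  obtain ⟨hε0, hεle⟩ := h3
  have hε1 : ε ≤ 1 := le_trans (hεle.trans (min_le_left _ _)) (by norm_num)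
  have hb1 : ‖(w' : ℝ → K) ε‖ ≤ C * ε ^ b := by
    simp only [coe_normSeminorm, Real.norm_eq_abs] at h1
    rwa [abs_of_nonneg (norm_nonneg _), abs_of_nonneg (Real.rpow_nonneg hε0.le _)] at h1
  have hb2 : ε ^ b ≤ ε ^ (c - δ / 2) := Real.rpow_le_rpow_of_exponent_ge hε0 hε1 hbgt.le
  have hneg1 : ‖(w : ℝ → K) ε - (w' : ℝ → K) ε‖ ≤ ε ^ (c - δ / 2) := by
    have h2' : ‖-(w : ℝ → K) ε + (w' : ℝ → K) ε‖ ≤ ε ^ m := by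
      simpa [coe_normSeminorm] using h2
    calc ‖(w : ℝ → K) ε - (w' : ℝ → K) ε‖ = ‖-(w : ℝ → K) ε + (w' : ℝ → K) ε‖ := by
          rw [norm_sub_rev, neg_add_eq_sub]
      _ ≤ ε ^ m := h2'
      _ = ε ^ (m : ℝ) := (Real.rpow_natCast ε m).symm
      _ ≤ ε ^ (c - δ / 2) := Real.rpow_le_rpow_of_exponent_ge hε0 hε1 hmc
  have hCeps : (C + 1) * ε ^ (δ / 2) ≤ 1 := by
    have h4 : ε ^ (δ / 2) ≤ t₀ ^ (δ / 2) :=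
      Real.rpow_le_rpow hε0.le (hεle.trans (min_le_right _ _)) (by positivity)
    have h5 : t₀ ^ (δ / 2) = (C + 1)⁻¹ := by
      rw [ht₀def, ← Real.rpow_mul (by positivity),
        show (2 / δ) * (δ / 2) = 1 by field_simp, Real.rpow_one]
    rw [h5] at h4
    calc (C + 1) * ε ^ (δ / 2) ≤ (C + 1) * (C + 1)⁻¹ := by
          nlinarith [Real.rpow_nonneg hε0.le (δ / 2)]
      _ = 1 := mul_inv_cancel₀ (by positivity)
  have hsplit : ε ^ (c - δ / 2) = ε ^ (δ / 2) * ε ^ (c - δ) := by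
    rw [← Real.rpow_add hε0]; ring_nf
  have htri : ‖(w : ℝ → K) ε‖ ≤ ‖(w' : ℝ → K) ε‖ + ‖(w : ℝ → K) ε - (w' : ℝ → K) ε‖ := by
    have h := norm_add_le ((w' : ℝ → K) ε) ((w : ℝ → K) ε - (w' : ℝ → K) ε)
    rw [show (w' : ℝ → K) ε + ((w : ℝ → K) ε - (w' : ℝ → K) ε) = (w : ℝ → K) ε by ring] at h
    exact h
  calc ‖(w : ℝ → K) ε‖ ≤ ‖(w' : ℝ → K) ε‖ + ‖(w : ℝ → K) ε - (w' : ℝ → K) ε‖ := htri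
    _ ≤ C * ε ^ (c - δ / 2) + ε ^ (c - δ / 2) := by nlinarith
    _ = (C + 1) * (ε ^ (δ / 2) * ε ^ (c - δ)) := by rw [← hsplit]; ring
    _ ≤ 1 * ε ^ (c - δ) := by
        nlinarith [Real.rpow_nonneg hε0.le (c - δ), Real.rpow_nonneg hε0.le (δ / 2)]
    _ = ε ^ (c - δ) := one_mul _

end SphericalCompleteness

/-- **Spherical completeness of `ℝ̃` and `ℂ̃`.** A decreasing chain of sharp
balls `B_n = {x : |x - a_n|_s ≤ r_n}` in `𝕂̃` (`𝕂 = ℝ` or `ℂ`) has non-void intersection. -/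
theorem spherical_completeness (K : Type*) [RCLike K]
    (a : ℕ → GN K) (r : ℕ → ℝ) (hr : ∀ n, 0 < r n)
    (hdec : ∀ n,
      {x : GN K | sharpSemi (normFamily K) () (x - a (n + 1)) ≤ r (n + 1)} ⊆
      {x : GN K | sharpSemi (normFamily K) () (x - a n) ≤ r n}) :
    (⋂ n, {x : GN K | sharpSemi (normFamily K) () (x - a n) ≤ r n}).Nonempty := by
  classical
  set A : ℕ → moderateGroup (normFamily K) := fun n => (a n).out with hA
  have hAmk : ∀ n, (QuotientAddGroup.mk (A n) : GN K) = a n :=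
    fun n => QuotientAddGroup.out_eq' (a n)
  -- each center belongs to its own ball
  have hself : ∀ k, sharpSemi (normFamily K) () (a k - a k) ≤ r k := by
    intro k
    have h0 : (QuotientAddGroup.mk (0 : moderateGroup (normFamily K)) : GN K) = a k - a k := by
      rw [sub_self, QuotientAddGroup.mk_zero]
    have h := sharpSemi_le_exp (0 : moderateGroup (normFamily K)) (-Real.log (r k)) h0 ?_
    · rwa [neg_neg, Real.exp_log (hr k)] at h
    · filter_upwards [self_mem_nhdsWithin] with ε hε
      have hz : ((0 : moderateGroup (normFamily K)) : ℝ → K) ε = 0 := rfl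
      rw [hz, norm_zero]
      exact Real.rpow_nonneg (le_of_lt hε) _
  -- nested balls
  have hchain : ∀ n k, n ≤ k → ∀ x : GN K,
      sharpSemi (normFamily K) () (x - a k) ≤ r k →
      sharpSemi (normFamily K) () (x - a n) ≤ r n := by
    intro n k hnk
    induction k, hnk using Nat.le_induction with
    | base => exact fun x hx => hx
    | succ k hk ih => exact fun x hx => ih x (hdec k hx)
  have hmemB : ∀ n k, n ≤ k → sharpSemi (normFamily K) () (a k - a n) ≤ r n :=
    fun n k hnk => hchain n k hnk (a k) (hself k)
  -- the crucial eventual bound on differences of representatives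
  have H : ∀ n k, n ≤ k → ∀ δ : ℝ, 0 < δ →
      ∀ᶠ ε in 𝓝[>] (0 : ℝ), ‖(A k : ℝ → K) ε - (A n : ℝ → K) ε‖ ≤
        ε ^ (-Real.log (r n) - δ) := by
    intro n k hnk δ hδ
    have hmk : (QuotientAddGroup.mk (A k - A n) : GN K) = a k - a n := by
      rw [QuotientAddGroup.mk_sub, hAmk, hAmk]
    have h := eventually_le_of_sharpSemi_le (A k - A n) hmk (hr n) hδ (hmemB n k hnk)
    filter_upwards [h] with ε hε
    exact hε
  -- choose thresholds
  have hP : ∀ m : ℕ, ∃ t : ℝ, 0 < t ∧ t ≤ 1 / 2 ∧ ∀ ε : ℝ, 0 < ε → ε ≤ t →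
      ∀ n k, n ≤ k → k ≤ m →
      ‖(A k : ℝ → K) ε - (A n : ℝ → K) ε‖ ≤
        ε ^ (-Real.log (r n) - 1 / ((m : ℝ) + 1)) := by
    intro m
    have hev : ∀ᶠ ε in 𝓝[>] (0 : ℝ), ∀ k ∈ Finset.range (m + 1), ∀ n ∈ Finset.range (m + 1),
        n ≤ k → ‖(A k : ℝ → K) ε - (A n : ℝ → K) ε‖ ≤
          ε ^ (-Real.log (r n) - 1 / ((m : ℝ) + 1)) := by
      rw [eventually_all_finset]
      intro k _
      rw [eventually_all_finset]
      intro n _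
      by_cases hnk : n ≤ k
      · filter_upwards [H n k hnk (1 / ((m : ℝ) + 1)) (by positivity)] with ε hε _
        exact hε
      · filter_upwards [] with ε h
        exact absurd h hnk
    have h12 : ∀ᶠ ε in 𝓝[>] (0 : ℝ), ε ∈ Set.Ioc (0 : ℝ) (1 / 2) :=
      Ioc_mem_nhdsGT_of_mem ⟨le_rfl, by norm_num⟩
    have hboth := hev.and h12
    rw [eventually_iff] at hboth
    obtain ⟨t, ht0, hsub⟩ := mem_nhdsGT_iff_exists_Ioc_subset.mp hboth
    have htP := hsub ⟨ht0, le_rfl⟩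
    refine ⟨t, ht0, htP.2.2, ?_⟩
    intro ε hε0 hεt n k hnk hkm
    have hmem := hsub ⟨hε0, hεt⟩
    exact hmem.1 k (Finset.mem_range.mpr (Nat.lt_succ_of_le hkm)) n
      (Finset.mem_range.mpr (Nat.lt_succ_of_le (hnk.trans hkm))) hnk
  choose t ht0 ht12 htb using hP
  -- recursive decreasing thresholds
  let η : ℕ → ℝ := fun m => Nat.rec (t 0) (fun m ih => min (t (m + 1)) (ih / 2)) m
  have hη0 : η 0 = t 0 := rfl
  have hηs : ∀ m, η (m + 1) = min (t (m + 1)) (η m / 2) := fun m => rfl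
  have hηpos : ∀ m, 0 < η m := by
    intro m
    induction m with
    | zero => exact ht0 0
    | succ m ih => rw [hηs]; exact lt_min (ht0 _) (by linarith)
  have hηt : ∀ m, η m ≤ t m := by
    intro m
    cases m with
    | zero => exact le_of_eq hη0
    | succ m => rw [hηs]; exact min_le_left _ _
  have hη12 : ∀ m, η m ≤ 1 / 2 := fun m => (hηt m).trans (ht12 m)
  have hηhalf : ∀ m, η (m + 1) ≤ η m / 2 := by
    intro m; rw [hηs]; exact min_le_right _ _
  have hηmono : ∀ m m', m ≤ m' → η m' ≤ η m := by
    intro m m' h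
    induction m', h using Nat.le_induction with
    | base => exact le_rfl
    | succ k hk ih =>
      have h1 := hηhalf k
      have h2 := hηpos k
      linarith
  have hηsmall : ∀ m : ℕ, η m ≤ (1 / 2 : ℝ) ^ (m + 1) := by
    intro m
    induction m with
    | zero => simpa using hη12 0
    | succ m ih =>
      calc η (m + 1) ≤ η m / 2 := hηhalf m
        _ ≤ (1 / 2 : ℝ) ^ (m + 1) / 2 := by linarith
        _ = (1 / 2 : ℝ) ^ (m + 2) := by ring
  -- the index function
  have hBdd : ∀ ε : ℝ, 0 < ε → BddAbove {m : ℕ | ε ≤ η m} := by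
    intro ε hε
    refine ⟨Nat.ceil ε⁻¹, fun m hm => ?_⟩
    have h1 : ε ≤ (1 / 2 : ℝ) ^ (m + 1) := le_trans hm (hηsmall m)
    have h2 : ((m : ℝ) + 1) ≤ 2 ^ (m + 1) := by
      have := Nat.lt_two_pow_self (n := m + 1)
      exact_mod_cast this.le
    have h3 : (1 / 2 : ℝ) ^ (m + 1) = ((2 : ℝ) ^ (m + 1))⁻¹ := by
      rw [one_div, inv_pow]
    have h4 : (1 / 2 : ℝ) ^ (m + 1) ≤ ((m : ℝ) + 1)⁻¹ := by
      rw [h3]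
      exact inv_anti₀ (by positivity) h2
    have h5 : ε ≤ ((m : ℝ) + 1)⁻¹ := h1.trans h4
    have h6 : ((m : ℝ) + 1) ≤ ε⁻¹ := by
      have hc1 : ε * ((m : ℝ) + 1) ≤ 1 := by
        have := mul_le_mul_of_nonneg_right h5 (show (0 : ℝ) ≤ (m : ℝ) + 1 by positivity)
        rwa [inv_mul_cancel₀ (show ((m : ℝ) + 1) ≠ 0 by positivity)] at this
      have hc2 : ε⁻¹ * ε = 1 := inv_mul_cancel₀ (ne_of_gt hε)
      nlinarith [inv_pos.mpr hε]
    have h7 : (m : ℝ) ≤ (Nat.ceil ε⁻¹ : ℝ) := le_trans (by linarith) (Nat.le_ceil _)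
    exact_mod_cast h7
  let N : ℝ → ℕ := fun ε => sSup {m | ε ≤ η m}
  have hNmem : ∀ ε : ℝ, 0 < ε → ε ≤ η 0 → ε ≤ η (N ε) :=
    fun ε hε h0 => Nat.sSup_mem ⟨0, h0⟩ (hBdd ε hε)
  have hNge : ∀ (ε : ℝ) (m : ℕ), 0 < ε → ε ≤ η m → m ≤ N ε :=
    fun ε m hε hm => le_csSup (hBdd ε hε) hm
  let x : ℝ → K := fun ε => (A (N ε) : ℝ → K) ε
  -- moderateness of x
  obtain ⟨M₀, hM₀⟩ := (A 0).2 ()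
  have hxmod : IsModerate (normFamily K) x := by
    intro i
    refine ⟨M₀ + Nat.ceil |(-Real.log (r 0))| + 2, ?_⟩
    have hmem : Set.Ioc (0 : ℝ) (η 0) ∈ 𝓝[>] (0 : ℝ) :=
      Ioc_mem_nhdsGT_of_mem ⟨le_rfl, hηpos 0⟩
    filter_upwards [hM₀, hmem] with ε h0 hε
    obtain ⟨hε0, hεη⟩ := hε
    have hε12 : ε ≤ 1 / 2 := hεη.trans (hη12 0)
    have hε1 : ε ≤ 1 := by linarith
    have hεN : ε ≤ η (N ε) := hNmem ε hε0 hεη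
    have hb := htb (N ε) ε hε0 (hεN.trans (hηt (N ε))) 0 (N ε) (Nat.zero_le _) le_rfl
    have hb1 : ‖(A (N ε) : ℝ → K) ε - (A 0 : ℝ → K) ε‖ ≤ ε ^ (-Real.log (r 0) - 1) := by
      refine hb.trans (Real.rpow_le_rpow_of_exponent_ge hε0 hε1 ?_)
      have hfrac : 1 / ((N ε : ℝ) + 1) ≤ 1 := by
        rw [div_le_one (by positivity)]
        linarith [Nat.cast_nonneg (α := ℝ) (N ε)]
      linarith
    have h0' : ‖(A 0 : ℝ → K) ε‖ ≤ ε ^ (-(M₀ : ℝ)) := by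
      have hconv : (ε : ℝ) ^ (-(M₀ : ℤ)) = ε ^ (-(M₀ : ℝ)) := by
        rw [← Real.rpow_intCast]; norm_num
      rw [← hconv]
      simpa [coe_normSeminorm] using h0
    have htri : ‖x ε‖ ≤ ‖(A 0 : ℝ → K) ε‖ + ‖(A (N ε) : ℝ → K) ε - (A 0 : ℝ → K) ε‖ := by
      have h := norm_add_le ((A 0 : ℝ → K) ε)
        ((A (N ε) : ℝ → K) ε - (A 0 : ℝ → K) ε)
      rw [show (A 0 : ℝ → K) ε + ((A (N ε) : ℝ → K) ε - (A 0 : ℝ → K) ε)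
          = (A (N ε) : ℝ → K) ε by ring] at h
      exact h
    have hceil : |(-Real.log (r 0))| ≤ (Nat.ceil |(-Real.log (r 0))| : ℝ) := Nat.le_ceil _
    have hsum : ε ^ (-(M₀ : ℝ)) + ε ^ (-Real.log (r 0) - 1)
        ≤ ε ^ (-((M₀ + Nat.ceil |(-Real.log (r 0))| + 2 : ℕ) : ℝ)) := by
      apply sum_rpow_le hε0 hε12
      · push_cast
        linarith [Nat.cast_nonneg (α := ℝ) (Nat.ceil |(-Real.log (r 0))|)]
      · push_cast
        have := neg_abs_le (-Real.log (r 0))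
        linarith
    have hfin : ‖x ε‖ ≤ ε ^ (-((M₀ + Nat.ceil |(-Real.log (r 0))| + 2 : ℕ) : ℤ)) := by
      have hconv : (ε : ℝ) ^ (-((M₀ + Nat.ceil |(-Real.log (r 0))| + 2 : ℕ) : ℤ))
          = ε ^ (-((M₀ + Nat.ceil |(-Real.log (r 0))| + 2 : ℕ) : ℝ)) := by
        rw [← Real.rpow_intCast]; norm_num
      rw [hconv]
      linarith
    simpa [coe_normSeminorm] using hfin
  -- the diagonal bound
  have hxdiff : ∀ (n : ℕ) (δ : ℝ), 0 < δ →
      ∀ᶠ ε in 𝓝[>] (0 : ℝ), ‖x ε - (A n : ℝ → K) ε‖ ≤ ε ^ (-Real.log (r n) - δ) := by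
    intro n δ hδ
    set m₀ : ℕ := max n (Nat.ceil δ⁻¹) with hm₀
    have hmem : Set.Ioc (0 : ℝ) (η m₀) ∈ 𝓝[>] (0 : ℝ) :=
      Ioc_mem_nhdsGT_of_mem ⟨le_rfl, hηpos m₀⟩
    filter_upwards [hmem] with ε hε
    obtain ⟨hε0, hεη⟩ := hε
    have hε1 : ε ≤ 1 := le_trans (hεη.trans (hη12 m₀)) (by norm_num)
    have hNm : m₀ ≤ N ε := hNge ε m₀ hε0 hεη
    have hεN : ε ≤ η (N ε) := hNmem ε hε0 (hεη.trans (hηmono 0 m₀ (Nat.zero_le _)))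
    have hb := htb (N ε) ε hε0 (hεN.trans (hηt (N ε))) n (N ε)
      (le_trans (le_max_left _ _) hNm) le_rfl
    refine hb.trans (Real.rpow_le_rpow_of_exponent_ge hε0 hε1 ?_)
    have hceil : (Nat.ceil δ⁻¹ : ℝ) ≤ (N ε : ℝ) := by
      exact_mod_cast le_trans (le_max_right _ _) hNm
    have h1 : δ⁻¹ ≤ (N ε : ℝ) + 1 := by linarith [Nat.le_ceil δ⁻¹]
    have h2 : 1 / ((N ε : ℝ) + 1) ≤ δ := by
      rw [div_le_iff₀ (by positivity)]
      have hδinv : δ⁻¹ * δ = 1 := inv_mul_cancel₀ (ne_of_gt hδ)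
      nlinarith
    linarith
  -- conclusion
  refine ⟨QuotientAddGroup.mk (⟨x, hxmod⟩ : moderateGroup (normFamily K)),
    Set.mem_iInter.mpr fun n => ?_⟩
  show sharpSemi (normFamily K) ()
    ((QuotientAddGroup.mk (⟨x, hxmod⟩ : moderateGroup (normFamily K)) : GN K) - a n) ≤ r n
  refine le_of_forall_pos_le_add fun γ hγ => ?_
  have hratio : 1 < (r n + γ) / r n := (one_lt_div (hr n)).mpr (by linarith)
  have hδ : 0 < Real.log ((r n + γ) / r n) := Real.log_pos hratio
  have hmk : (QuotientAddGroup.mk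
      ((⟨x, hxmod⟩ : moderateGroup (normFamily K)) - A n) : GN K)
      = (QuotientAddGroup.mk (⟨x, hxmod⟩ : moderateGroup (normFamily K)) : GN K) - a n := by
    rw [QuotientAddGroup.mk_sub, hAmk]
  have hb : ∀ᶠ ε in 𝓝[>] (0 : ℝ),
      ‖(((⟨x, hxmod⟩ : moderateGroup (normFamily K)) - A n :
        moderateGroup (normFamily K)) : ℝ → K) ε‖ ≤
        ε ^ (-Real.log (r n) - Real.log ((r n + γ) / r n)) := by
    filter_upwards [hxdiff n _ hδ] with ε hε
    exact hε
  have h := sharpSemi_le_exp _ (-Real.log (r n) - Real.log ((r n + γ) / r n)) hmk hb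
  have hexp : Real.exp (-(-Real.log (r n) - Real.log ((r n + γ) / r n))) = r n + γ := by
    rw [show -(-Real.log (r n) - Real.log ((r n + γ) / r n))
        = Real.log (r n) + Real.log ((r n + γ) / r n) by ring, Real.exp_add,
      Real.exp_log (hr n), Real.exp_log (by positivity : (0 : ℝ) < (r n + γ) / r n)]
    rw [mul_comm]
    exact div_mul_cancel₀ _ (ne_of_gt (hr n))
  rwa [hexp] at h

end ColombeauPaper
end
end

section
/- Suppose the topology of E is generated by an increasing sequence of seminorms (p_n)_{n∈ℕ}. Then G_E is complete with respect to the sharp topology: every sequence (u_j)_{j∈ℕ} in G_E which is Cauchy for each ultra-pseudo-seminorm P_n (i.e., for every n and every r > 0 there is J with P_n(u_k − u_l) < r for all k, l ≥ J) converges in the sharp topology to some u ∈ G_E. -/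
open Filter Topology Asymptotics

noncomputable section

namespace ColombeauPaper

variable {ι κ : Type*} {E : Type*} [AddCommGroup E] [Module ℝ E]
  {F : Type*} [AddCommGroup F] [Module ℝ F]

section Completeness

variable {E₀ : Type*} [AddCommGroup E₀] [Module ℝ E₀]

lemma eventually_nhdsGT_iff {P : ℝ → Prop} :
    (∀ᶠ ε in 𝓝[>] (0:ℝ), P ε) ↔ ∃ δ : ℝ, 0 < δ ∧ ∀ ε : ℝ, 0 < ε → ε ≤ δ → P ε := by
  constructor
  · intro h
    obtain ⟨δ, hδ, hsub⟩ := mem_nhdsGT_iff_exists_Ioc_subset.1 h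
    exact ⟨δ, hδ, fun ε h1 h2 => hsub ⟨h1, h2⟩⟩
  · rintro ⟨δ, hδ, h⟩
    exact mem_nhdsGT_iff_exists_Ioc_subset.2 ⟨δ, hδ, fun ε hε => h ε hε.1 hε.2⟩

/-- The defining set of the ultra-pseudo-seminorm. -/
def semiSet (p : ℕ → Seminorm ℝ E₀) (i : ℕ) (x : Colombeau p) : Set ℝ :=
  {r : ℝ | ∃ (b : ℝ) (w : moderateGroup p), (QuotientAddGroup.mk w : Colombeau p) = x ∧
    r = Real.exp (-b) ∧ (fun ε => (p i ((w : ℝ → E₀) ε) : ℝ)) =O[𝓝[>] (0 : ℝ)] fun ε => ε ^ b}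

lemma sharpSemi_eq_sInf (p : ℕ → Seminorm ℝ E₀) (i : ℕ) (x : Colombeau p) :
    sharpSemi p i x = sInf (semiSet p i x) := rfl

lemma semiSet_nonempty (p : ℕ → Seminorm ℝ E₀) (i : ℕ) (x : Colombeau p) :
    (semiSet p i x).Nonempty := by
  obtain ⟨w, hw⟩ := QuotientAddGroup.mk_surjective x
  obtain ⟨M, hM⟩ := w.2 i
  refine ⟨Real.exp (-(-(M:ℝ))), -(M:ℝ), w, hw, rfl, Asymptotics.IsBigO.of_bound 1 ?_⟩
  filter_upwards [hM, self_mem_nhdsWithin] with ε h1 h2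
  have h2' : (0:ℝ) < ε := h2
  rw [one_mul, Real.norm_of_nonneg (apply_nonneg _ _),
    Real.norm_of_nonneg (Real.rpow_pos_of_pos h2' _).le]
  calc p i ((w : ℝ → E₀) ε) ≤ ε ^ (-(M:ℤ)) := h1
    _ = ε ^ (-(M:ℝ)) := by
        rw [show (-(M:ℝ)) = ((-(M:ℤ) : ℤ) : ℝ) by push_cast; ring, Real.rpow_intCast]

lemma semiSet_bddBelow (p : ℕ → Seminorm ℝ E₀) (i : ℕ) (x : Colombeau p) :
    BddBelow (semiSet p i x) := by
  refine ⟨0, fun r hr => ?_⟩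
  obtain ⟨b, w, _, rfl, _⟩ := hr
  exact (Real.exp_pos _).le

lemma sharpSemi_le (p : ℕ → Seminorm ℝ E₀) {i : ℕ} {x : Colombeau p} {r : ℝ}
    (h : r ∈ semiSet p i x) : sharpSemi p i x ≤ r :=
  csInf_le (semiSet_bddBelow p i x) h

lemma sharpSemi_lt_iff (p : ℕ → Seminorm ℝ E₀) {i : ℕ} {x : Colombeau p} {r : ℝ} :
    sharpSemi p i x < r ↔ ∃ s ∈ semiSet p i x, s < r :=
  csInf_lt_iff (semiSet_bddBelow p i x) (semiSet_nonempty p i x)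

lemma mem_semiSet_of_bound (p : ℕ → Seminorm ℝ E₀) {i : ℕ} {x : Colombeau p}
    (w : moderateGroup p) (hw : (QuotientAddGroup.mk w : Colombeau p) = x) (j : ℕ) (C : ℝ)
    (h : ∀ᶠ ε in 𝓝[>] (0:ℝ), p i ((w : ℝ → E₀) ε) ≤ C * ε ^ j) :
    Real.exp (-(j:ℝ)) ∈ semiSet p i x := by
  refine ⟨(j:ℝ), w, hw, rfl, Asymptotics.IsBigO.of_bound C ?_⟩
  filter_upwards [h, self_mem_nhdsWithin] with ε h1 h2
  have h2' : (0:ℝ) < ε := h2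
  rw [Real.norm_of_nonneg (apply_nonneg _ _),
    Real.norm_of_nonneg (Real.rpow_pos_of_pos h2' _).le, Real.rpow_natCast]
  exact h1

lemma seminorm_le_add_sub (q : Seminorm ℝ E₀) (a b : E₀) : q a ≤ q b + q (b - a) := by
  calc q a = q (b - (b - a)) := by rw [sub_sub_cancel]
    _ ≤ q b + q (b - a) := map_sub_le_add q _ _

lemma rep_bound_of_lt (p : ℕ → Seminorm ℝ E₀) {i j : ℕ} {x : Colombeau p}
    (hx : sharpSemi p i x < Real.exp (-(j:ℝ)))
    (w : moderateGroup p) (hw : (QuotientAddGroup.mk w : Colombeau p) = x) :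
    ∀ᶠ ε in 𝓝[>] (0:ℝ), p i ((w : ℝ → E₀) ε) ≤ ε ^ j := by
  obtain ⟨s, ⟨b, w', hw', rfl, hO⟩, hs⟩ := (sharpSemi_lt_iff p).1 hx
  have hbj : (j:ℝ) < b := by
    have := Real.exp_lt_exp.1 hs; linarith
  obtain ⟨C, hC⟩ := hO.bound
  have hmk : (QuotientAddGroup.mk w : Colombeau p) = QuotientAddGroup.mk w' := by rw [hw, hw']
  have hneg : IsNegligible p ((-w + w' : moderateGroup p) : ℝ → E₀) := QuotientAddGroup.eq.1 hmk
  have htd : Tendsto (fun ε : ℝ => C * ε ^ (b - (j:ℝ))) (𝓝[>] (0:ℝ)) (𝓝 0) := by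
    have h1 : Tendsto (fun ε : ℝ => ε ^ (b - (j:ℝ))) (𝓝 (0:ℝ)) (𝓝 ((0:ℝ) ^ (b - (j:ℝ)))) :=
      (Real.continuousAt_rpow_const 0 _ (Or.inr (by linarith))).tendsto
    rw [Real.zero_rpow (by linarith : (0:ℝ) < b - (j:ℝ)).ne'] at h1
    simpa using ((h1.mono_left nhdsWithin_le_nhds).const_mul C)
  have hev : ∀ᶠ ε in 𝓝[>] (0:ℝ), C * ε ^ (b - (j:ℝ)) < 1/2 :=
    htd.eventually (gt_mem_nhds (by norm_num))
  filter_upwards [hC, hneg i (j+1), hev, small_mem, self_mem_nhdsWithin]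
    with ε h1 h2 h3 h4 h5
  have h5' : (0:ℝ) < ε := h5
  have hw'b : p i ((w' : ℝ → E₀) ε) ≤ C * ε ^ b := by
    rw [Real.norm_of_nonneg (apply_nonneg _ _),
      Real.norm_of_nonneg (Real.rpow_pos_of_pos h5' _).le] at h1
    exact h1
  have hval : ((-w + w' : moderateGroup p) : ℝ → E₀) ε
      = (w' : ℝ → E₀) ε - (w : ℝ → E₀) ε := by
    show -((w : ℝ → E₀) ε) + (w' : ℝ → E₀) ε = _
    abel
  have hsplit : p i ((w : ℝ → E₀) ε)
      ≤ p i ((w' : ℝ → E₀) ε) + p i (((-w + w' : moderateGroup p) : ℝ → E₀) ε) := by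
    rw [hval]
    exact seminorm_le_add_sub (p i) _ _
  have hb1 : C * ε ^ b ≤ (1/2) * ε ^ j := by
    have he : ε ^ b = (ε ^ (b - (j:ℝ))) * ε ^ j := by
      rw [← Real.rpow_natCast ε j, ← Real.rpow_add h5']
      congr 1
      ring
    rw [he, ← mul_assoc]
    exact mul_le_mul_of_nonneg_right h3.le (pow_nonneg h5'.le j)
  have hb2 : ε ^ (j+1) ≤ (1/2) * ε ^ j := by
    rw [pow_succ]
    calc ε ^ j * ε ≤ ε ^ j * (1/2) := by
          exact mul_le_mul_of_nonneg_left h4.2 (pow_nonneg h5'.le j)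
      _ = (1/2) * ε ^ j := mul_comm _ _
  calc p i ((w : ℝ → E₀) ε)
      ≤ p i ((w' : ℝ → E₀) ε) + p i (((-w + w' : moderateGroup p) : ℝ → E₀) ε) := hsplit
    _ ≤ C * ε ^ b + ε ^ (j+1) := add_le_add hw'b h2
    _ ≤ (1/2) * ε ^ j + (1/2) * ε ^ j := add_le_add hb1 hb2
    _ = ε ^ j := by ring

lemma sharpSemi_add_lt (p : ℕ → Seminorm ℝ E₀) {i : ℕ} {x y : Colombeau p} {r : ℝ}
    (hx : sharpSemi p i x < r) (hy : sharpSemi p i y < r) :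
    sharpSemi p i (x + y) < r := by
  obtain ⟨s1, ⟨b1, w1, hw1, rfl, hO1⟩, hs1⟩ := (sharpSemi_lt_iff p).1 hx
  obtain ⟨s2, ⟨b2, w2, hw2, rfl, hO2⟩, hs2⟩ := (sharpSemi_lt_iff p).1 hy
  set b := min b1 b2 with hb
  have hmono : ∀ b' : ℝ, b ≤ b' →
      (fun ε : ℝ => ε ^ b') =O[𝓝[>] (0:ℝ)] (fun ε : ℝ => ε ^ b) := by
    intro b' hb'
    apply Asymptotics.IsBigO.of_bound 1
    filter_upwards [small_mem, self_mem_nhdsWithin] with ε h1 h2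
    have h2' : (0:ℝ) < ε := h2
    rw [one_mul, Real.norm_of_nonneg (Real.rpow_pos_of_pos h2' _).le,
      Real.norm_of_nonneg (Real.rpow_pos_of_pos h2' _).le]
    exact Real.rpow_le_rpow_of_exponent_ge h2' (by linarith [h1.2]) hb'
  have hO : (fun ε => (p i (((w1 + w2 : moderateGroup p) : ℝ → E₀) ε) : ℝ))
      =O[𝓝[>] (0:ℝ)] fun ε => ε ^ b := by
    have hsum : (fun ε => (p i ((w1 : ℝ → E₀) ε) + p i ((w2 : ℝ → E₀) ε) : ℝ))
        =O[𝓝[>] (0:ℝ)] fun ε => ε ^ b :=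
      (hO1.trans (hmono b1 (min_le_left _ _))).add (hO2.trans (hmono b2 (min_le_right _ _)))
    refine Asymptotics.IsBigO.trans (Asymptotics.IsBigO.of_bound 1 ?_) hsum
    filter_upwards with ε
    rw [one_mul, Real.norm_of_nonneg (apply_nonneg _ _),
      Real.norm_of_nonneg (add_nonneg (apply_nonneg _ _) (apply_nonneg _ _))]
    simpa using map_add_le_add (p i) ((w1 : ℝ → E₀) ε) ((w2 : ℝ → E₀) ε)
  have hmk : (QuotientAddGroup.mk (w1 + w2) : Colombeau p) = x + y := by
    rw [← hw1, ← hw2]; rfl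
  have hmem : Real.exp (-b) ∈ semiSet p i (x + y) := ⟨b, w1 + w2, hmk, rfl, hO⟩
  refine lt_of_le_of_lt (sharpSemi_le p hmem) ?_
  rcases min_cases b1 b2 with ⟨h, _⟩ | ⟨h, _⟩ <;> rw [hb, h] <;> assumption

lemma tendsto_sharpTopology (p : ℕ → Seminorm ℝ E₀) {v : Colombeau p} {u : ℕ → Colombeau p}
    (h : ∀ n : ℕ, ∀ r : ℝ, 0 < r → ∀ᶠ k in atTop, sharpSemi p n (u k - v) < r) :
    Tendsto u atTop (@nhds _ (sharpTopology p) v) := by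
  have hn : @nhds _ (sharpTopology p) v =
      ⨅ s ∈ {s | v ∈ s ∧ s ∈ {B | ∃ (u₀ : Colombeau p) (i : ℕ) (r : ℝ), 0 < r ∧
        B = {x | sharpSemi p i (x - u₀) < r}}}, 𝓟 s :=
    TopologicalSpace.nhds_generateFrom
  rw [hn, tendsto_iInf]
  intro s
  rw [tendsto_iInf]
  intro hs
  rw [tendsto_principal]
  obtain ⟨hvs, u₀, i, r, hr, rfl⟩ := hs
  filter_upwards [h i r hr] with k hk
  have := sharpSemi_add_lt p hk hvs
  rwa [sub_add_sub_cancel] at this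

lemma telescope_sum {M : Type*} [AddCommGroup M] (f : ℕ → M) {j K : ℕ} (h : j ≤ K) :
    ∑ i ∈ Finset.Ico j K, (f (i+1) - f i) = f K - f j := by
  induction K, h using Nat.le_induction with
  | base => simp
  | succ K hK ih => rw [Finset.sum_Ico_succ_top hK, ih]; abel

lemma seminorm_sum_le (q : Seminorm ℝ E₀) (s : Finset ℕ) (f : ℕ → E₀) :
    q (∑ i ∈ s, f i) ≤ ∑ i ∈ s, q (f i) := by
  classical
  induction s using Finset.induction_on with
  | empty => simp
  | insert _ _ h ih =>
    rw [Finset.sum_insert h, Finset.sum_insert h]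
    exact le_trans (map_add_le_add _ _ _) (by linarith)

lemma geom_two {ε : ℝ} (h0 : 0 ≤ ε) (h : ε ≤ 1/2) (K : ℕ) :
    ∑ t ∈ Finset.range K, ε ^ t ≤ 2 := by
  have h1 : ∑ t ∈ Finset.range K, ε ^ t ≤ ∑ t ∈ Finset.range K, (1/2:ℝ) ^ t :=
    Finset.sum_le_sum fun t _ => pow_le_pow_left₀ h0 h t
  have h2 : ∑ t ∈ Finset.range K, (1/2:ℝ) ^ t = ((1/2)^K - 1)/((1/2) - 1) :=
    geom_sum_eq (by norm_num) K
  have h3 : (0:ℝ) ≤ (1/2)^K := by positivity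
  have h4 : ((1/2:ℝ)^K - 1)/((1/2) - 1) = 2 - 2 * (1/2)^K := by ring
  rw [h2, h4] at h1
  linarith

lemma sum_pow_Ico_le {ε : ℝ} (h0 : 0 ≤ ε) (h : ε ≤ 1/2) {j K : ℕ} :
    ∑ i ∈ Finset.Ico j K, ε ^ i ≤ 2 * ε ^ j := by
  rw [Finset.sum_Ico_eq_sum_range]
  calc ∑ k ∈ Finset.range (K - j), ε ^ (j + k)
      = ε ^ j * ∑ k ∈ Finset.range (K - j), ε ^ k := by
        rw [Finset.mul_sum]; exact Finset.sum_congr rfl (fun k _ => pow_add ε j k)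
    _ ≤ ε ^ j * 2 := mul_le_mul_of_nonneg_left (geom_two h0 h _) (pow_nonneg h0 j)
    _ = 2 * ε ^ j := mul_comm _ _

/-- The auxiliary decreasing sequence of thresholds. -/
def etaSeq (δ : ℕ → ℝ) : ℕ → ℝ
  | 0 => δ 0
  | j+1 => min (etaSeq δ j / 2) (δ (j+1))

end Completeness

/-- If the topology of `E` is generated by an increasing sequence of
seminorms `(p_n)`, then `𝒢_E` is complete for the sharp topology: every sequence which is
Cauchy for each ultra-pseudo-seminorm `𝒫_n` converges in the sharp topology. -/
theorem colombeau_complete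
    {E : Type*} [AddCommGroup E] [Module ℝ E]
    (p : ℕ → Seminorm ℝ E) (hp : Monotone p)
    (u : ℕ → Colombeau p)
    (hcauchy : ∀ n : ℕ, ∀ r : ℝ, 0 < r → ∃ J : ℕ, ∀ k l : ℕ, J ≤ k → J ≤ l →
      sharpSemi p n (u k - u l) < r) :
    ∃ v : Colombeau p, Filter.Tendsto u Filter.atTop (@nhds _ (sharpTopology p) v) := by
  classical
  -- Step A: a monotone sequence of indices along which the Cauchy estimates hold.
  choose J0 hJ0 using fun (n j : ℕ) => hcauchy n (Real.exp (-(j:ℝ))) (Real.exp_pos _)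
  set φ : ℕ → ℕ := fun j => Finset.sup (Finset.range (j+1)) (fun n => J0 n j) with hφdef
  set ψ : ℕ → ℕ := fun j => Finset.sup (Finset.range (j+1)) φ with hψdef
  have hψmono : Monotone ψ := fun a b hab =>
    Finset.sup_mono (Finset.range_subset_range.2 (by omega))
  have hP1 : ∀ j n, n ≤ j → ∀ k l, ψ j ≤ k → ψ j ≤ l →
      sharpSemi p n (u k - u l) < Real.exp (-(j:ℝ)) := by
    intro j n hn k l hk hl
    have h1 : J0 n j ≤ φ j := Finset.le_sup (f := fun n => J0 n j)
      (Finset.mem_range.2 (by omega))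
    have h2 : φ j ≤ ψ j := Finset.le_sup (f := φ) (Finset.mem_range.2 (by omega))
    exact hJ0 n j k l (le_trans (le_trans h1 h2) hk) (le_trans (le_trans h1 h2) hl)
  -- representatives
  choose W hW using fun j => QuotientAddGroup.mk_surjective (u (ψ j))
  -- bounds on the consecutive differences
  have hd : ∀ j n, n ≤ j → ∀ᶠ ε in 𝓝[>] (0:ℝ),
      p n (((W (j+1) - W j : moderateGroup p) : ℝ → E) ε) ≤ ε ^ j := by
    intro j n hn
    refine rep_bound_of_lt p (x := u (ψ (j+1)) - u (ψ j)) ?_ (W (j+1) - W j) ?_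
    · exact hP1 j n hn _ _ (hψmono (Nat.le_succ j)) le_rfl
    · rw [QuotientAddGroup.mk_sub, hW, hW]
  -- thresholds δ
  have hδex : ∀ j : ℕ, ∃ δ : ℝ, 0 < δ ∧ δ ≤ 1/2 ∧
      ∀ ε : ℝ, 0 < ε → ε ≤ δ → ∀ n ≤ j,
        p n (((W (j+1) - W j : moderateGroup p) : ℝ → E) ε) ≤ ε ^ j := by
    intro j
    have hall : ∀ᶠ ε in 𝓝[>] (0:ℝ), ∀ n ∈ Finset.range (j+1),
        p n (((W (j+1) - W j : moderateGroup p) : ℝ → E) ε) ≤ ε ^ j :=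
      (eventually_all_finset _).2
        (fun n hn => hd j n (Nat.lt_succ_iff.1 (Finset.mem_range.1 hn)))
    obtain ⟨δ, hδ0, hδ2⟩ := eventually_nhdsGT_iff.1 hall
    exact ⟨min δ (1/2), lt_min hδ0 (by norm_num), min_le_right _ _,
      fun ε h1 h2 n hn =>
        hδ2 ε h1 (le_trans h2 (min_le_left _ _)) n (Finset.mem_range.2 (by omega))⟩
  choose δ hδpos hδhalf hδ using hδex
  -- the sequence η
  set η : ℕ → ℝ := etaSeq δ with hηdef
  have hηpos : ∀ j, 0 < η j := by
    intro j; induction j with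
    | zero => exact hδpos 0
    | succ j ih => exact lt_min (by linarith) (hδpos _)
  have hηδ : ∀ j, η j ≤ δ j := by
    intro j; cases j with
    | zero => exact le_rfl
    | succ j => exact min_le_right _ _
  have hηstep : ∀ j, η (j+1) ≤ η j / 2 := fun j => min_le_left _ _
  have hηanti : ∀ {i j : ℕ}, i ≤ j → η j ≤ η i := by
    intro i j hij
    induction j, hij using Nat.le_induction with
    | base => exact le_rfl
    | succ j hj ih => exact le_trans (le_trans (hηstep j) (by linarith [hηpos j])) ih
  have hηhalf : ∀ j, η j ≤ 1/2 := fun j => le_trans (hηδ j) (hδhalf j)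
  have hηpow : ∀ j, η j ≤ (1/2)^j := by
    intro j; induction j with
    | zero =>
      calc η 0 ≤ 1/2 := hηhalf 0
        _ ≤ (1/2:ℝ)^0 := by norm_num
    | succ j ih =>
      calc η (j+1) ≤ η j / 2 := hηstep j
        _ ≤ (1/2)^j / 2 := by linarith
        _ = (1/2)^(j+1) := by rw [pow_succ]; ring
  have hηto0 : ∀ ε : ℝ, 0 < ε → ∃ j, η j < ε := by
    intro ε hε
    obtain ⟨m, hm⟩ := exists_pow_lt_of_lt_one hε (by norm_num : (1/2:ℝ) < 1)
    exact ⟨m, lt_of_le_of_lt (hηpow m) hm⟩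
  -- the index function N and the glued net v
  set N : ℝ → ℕ := fun ε => if h : ∃ j, η j < ε then Nat.find h else 0 with hNdef
  set v : ℝ → E := fun ε => ((W (N ε) : ℝ → E)) ε with hvdef
  have hNspec : ∀ (ε : ℝ) (h : ∃ j, η j < ε), N ε = Nat.find h := by
    intro ε h; rw [hNdef]; exact dif_pos h
  have hNge : ∀ {j : ℕ} {ε : ℝ}, 0 < ε → ε ≤ η j → j < N ε := by
    intro j ε hε hεj
    have hex : ∃ i, η i < ε := hηto0 ε hε
    rw [hNspec ε hex, Nat.lt_find_iff]
    intro m hm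
    exact not_lt.2 (le_trans hεj (hηanti hm))
  have hεδ : ∀ {ε : ℝ}, 0 < ε → ∀ {i : ℕ}, i < N ε → ε ≤ δ i := by
    intro ε hε i hi
    have hex : ∃ j, η j < ε := hηto0 ε hε
    rw [hNspec ε hex] at hi
    exact le_trans (not_lt.1 (Nat.find_min hex hi)) (hηδ i)
  -- the key telescoping estimate
  have hkey : ∀ (j n : ℕ), n ≤ j → ∀ ε : ℝ, 0 < ε → ε ≤ η j →
      p n (v ε - (W j : ℝ → E) ε) ≤ 2 * ε ^ j := by
    intro j n hn ε hε hεη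
    have hε2 : ε ≤ 1/2 := le_trans hεη (hηhalf j)
    have hjN : j < N ε := hNge hε hεη
    have htel : v ε - (W j : ℝ → E) ε = ∑ i ∈ Finset.Ico j (N ε),
        ((W (i+1) : ℝ → E) ε - (W i : ℝ → E) ε) := by
      rw [telescope_sum (fun i => (W i : ℝ → E) ε) hjN.le]
    rw [htel]
    calc p n (∑ i ∈ Finset.Ico j (N ε), ((W (i+1) : ℝ → E) ε - (W i : ℝ → E) ε))
        ≤ ∑ i ∈ Finset.Ico j (N ε), p n ((W (i+1) : ℝ → E) ε - (W i : ℝ → E) ε) :=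
          seminorm_sum_le _ _ _
      _ ≤ ∑ i ∈ Finset.Ico j (N ε), ε ^ i := by
          apply Finset.sum_le_sum
          intro i hi
          obtain ⟨hij, hiN⟩ := Finset.mem_Ico.1 hi
          have := hδ i ε hε (hεδ hε hiN) n (le_trans hn hij)
          simpa using this
      _ ≤ 2 * ε ^ j := sum_pow_Ico_le hε.le hε2
  -- moderateness of v
  have hvmod : IsModerate p v := by
    intro n
    obtain ⟨M, hM⟩ := (W n).2 n
    refine ⟨M + 2, ?_⟩
    have hev : ∀ᶠ ε in 𝓝[>] (0:ℝ), ε ≤ η n :=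
      eventually_nhdsGT_iff.2 ⟨η n, hηpos n, fun _ _ h => h⟩
    filter_upwards [hM, hev, self_mem_nhdsWithin] with ε h1 h2 h3
    have h3' : (0:ℝ) < ε := h3
    have hkey' := hkey n n le_rfl ε h3' h2
    have h4 : p n (v ε) ≤ p n ((W n : ℝ → E) ε) + 2 * ε ^ n := by
      calc p n (v ε) = p n ((W n : ℝ → E) ε + (v ε - (W n : ℝ → E) ε)) := by
            rw [show (W n : ℝ → E) ε + (v ε - (W n : ℝ → E) ε) = v ε by abel]
        _ ≤ p n ((W n : ℝ → E) ε) + p n (v ε - (W n : ℝ → E) ε) := map_add_le_add _ _ _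
        _ ≤ p n ((W n : ℝ → E) ε) + 2 * ε ^ n := by linarith
    have hε2 : ε ≤ 1/2 := le_trans h2 (hηhalf n)
    have hinv2 : (2:ℝ) ≤ ε⁻¹ := by
      nlinarith [mul_inv_cancel₀ (ne_of_gt h3')]
    rw [zpow_neg_natCast_eq, zpow_natCast] at h1 ⊢
    have hBM : (1:ℝ) ≤ ε⁻¹ ^ M := one_le_pow₀ (by linarith)
    have hεn : ε ^ n ≤ 1 := pow_le_one₀ h3'.le (by linarith)
    have e1 : ε⁻¹ ^ M * 4 ≤ ε⁻¹ ^ (M+2) := by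
      have e2 : ε⁻¹ ^ (M+2) = ε⁻¹ ^ M * (ε⁻¹ * ε⁻¹) := by ring
      rw [e2]
      have e3 : (4:ℝ) ≤ ε⁻¹ * ε⁻¹ := by nlinarith
      exact mul_le_mul_of_nonneg_left e3 (by positivity)
    linarith
  -- the limit
  refine ⟨QuotientAddGroup.mk ⟨v, hvmod⟩, tendsto_sharpTopology p ?_⟩
  have hsub : ∀ n j : ℕ, n ≤ j →
      sharpSemi p n (u (ψ j) - QuotientAddGroup.mk ⟨v, hvmod⟩) ≤ Real.exp (-(j:ℝ)) := by
    intro n j hnj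
    apply sharpSemi_le p
    refine mem_semiSet_of_bound p (W j - ⟨v, hvmod⟩) ?_ j 2 ?_
    · rw [QuotientAddGroup.mk_sub, hW]
    · have hev : ∀ᶠ ε in 𝓝[>] (0:ℝ), ε ≤ η j :=
        eventually_nhdsGT_iff.2 ⟨η j, hηpos j, fun _ _ h => h⟩
      filter_upwards [hev, self_mem_nhdsWithin] with ε h2 h3
      have h3' : (0:ℝ) < ε := h3
      have hk := hkey j n hnj ε h3' h2
      calc p n (((W j - ⟨v, hvmod⟩ : moderateGroup p) : ℝ → E) ε)
          = p n (v ε - (W j : ℝ → E) ε) := by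
            rw [show ((W j - ⟨v, hvmod⟩ : moderateGroup p) : ℝ → E) ε
              = (W j : ℝ → E) ε - v ε from rfl, map_sub_rev]
        _ ≤ 2 * ε ^ j := hk
  intro n r hr
  obtain ⟨m, hm⟩ := exists_pow_lt_of_lt_one hr
    (by rw [← Real.exp_zero]; exact Real.exp_lt_exp.2 (by norm_num) : Real.exp (-1) < 1)
  have hm' : Real.exp (-(m:ℝ)) < r := by
    rw [show (-(m:ℝ)) = (m:ℝ) * (-1) by ring, Real.exp_nat_mul]
    exact hm
  set j := max n m with hjdef
  have hjn : n ≤ j := le_max_left _ _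
  have hjr : Real.exp (-(j:ℝ)) < r := by
    refine lt_of_le_of_lt (Real.exp_le_exp.2 ?_) hm'
    have : (m:ℝ) ≤ (j:ℝ) := by exact_mod_cast le_max_right n m
    linarith
  filter_upwards [eventually_ge_atTop (ψ j)] with k hk
  have h1 : sharpSemi p n (u k - u (ψ j)) < r :=
    lt_trans (hP1 j n hjn k (ψ j) hk le_rfl) hjr
  have h2 : sharpSemi p n (u (ψ j) - QuotientAddGroup.mk ⟨v, hvmod⟩) < r :=
    lt_of_le_of_lt (hsub n j hjn) hjr
  have h3 := sharpSemi_add_lt p h1 h2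
  rwa [sub_add_sub_cancel] at h3

end ColombeauPaper
end
end
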